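/- arXiv:1106.3754 — 7 statements merged into one kernel-verified Lean document; each statement's English description precedes it below -/
import Mathlib

section
/- For n odd, the maximum cardinality of a family of Hamiltonian paths in K_n such that the union of any two distinct members contains an odd cycle equals binomial(n, floor(n/2)). -/
open SimpleGraph

def IsHamPathGraph {n : ℕ} (G : SimpleGraph (Fin n)) : Prop :=
  ∃ (u v : Fin n) (p : G.Walk u v), p.IsHamiltonian ∧ G.edgeSet = {e | e ∈ p.edges}

def IsHamCycleGraph {n : ℕ} (G : SimpleGraph (Fin n)) : Prop :=
  ∃ (u : Fin n) (c : G.Walk u u), c.IsHamiltonianCycle ∧ G.edgeSet = {e | e ∈ c.edges}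

def HasCycleLen {V : Type*} (G : SimpleGraph V) (P : ℕ → Prop) : Prop :=
  ∃ (v : V) (c : G.Walk v v), c.IsCycle ∧ P c.length

def biparGraph {n : ℕ} (A : Finset (Fin n)) : SimpleGraph (Fin n) where
  Adj u v := (u ∈ A ∧ v ∉ A) ∨ (v ∈ A ∧ u ∉ A)
  symm := ⟨fun u v h => by tauto⟩
  loopless := ⟨fun u h => by tauto⟩

def almostBalanced {n : ℕ} (A : Finset (Fin n)) : Prop :=
  |(A.card : ℤ) - ((n : ℤ) - A.card)| ≤ 1

def ContainsK4 {n : ℕ} (G : SimpleGraph (Fin n)) : Prop :=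
  ∃ f : Fin 4 → Fin n, Function.Injective f ∧ ∀ i j, i ≠ j → G.Adj (f i) (f j)

set_option linter.unusedSectionVars false
set_option maxHeartbeats 1000000

namespace OddHam

variable {V : Type*} [DecidableEq V] {G : SimpleGraph V}

/-- Build a walk following `f 0, f 1, ..., f m`. -/
def buildWalk (f : ℕ → V) : ∀ (m : ℕ), (∀ i, i < m → G.Adj (f i) (f (i+1))) → G.Walk (f 0) (f m)
  | 0, _ => Walk.nil
  | (m+1), h => (buildWalk f m (fun i hi => h i (by omega))).concat (h m (by omega))

lemma buildWalk_support (f : ℕ → V) (m : ℕ) (h : ∀ i, i < m → G.Adj (f i) (f (i+1))) :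
    (buildWalk f m h).support = (List.range (m+1)).map f := by
  induction m with
  | zero => simp [buildWalk, List.range_succ]
  | succ m ih =>
    rw [buildWalk, Walk.support_concat, ih, List.range_succ (n := m+1)]
    simp

lemma buildWalk_edges (f : ℕ → V) (m : ℕ) (h : ∀ i, i < m → G.Adj (f i) (f (i+1))) :
    (buildWalk f m h).edges = (List.range m).map (fun i => s(f i, f (i+1))) := by
  induction m with
  | zero => simp [buildWalk]
  | succ m ih =>
    rw [buildWalk, Walk.edges_concat, ih, List.range_succ (n := m)]
    simp

lemma edge_start_of_path {v x y : V} (p : G.Walk v x) (hnd : p.support.Nodup)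
    (he : s(v, y) ∈ p.edges) : ∃ (h : G.Adj v y) (q : G.Walk y x), p = Walk.cons h q := by
  cases p with
  | nil => simp at he
  | cons h' q' =>
    rename_i w' _
    rw [Walk.edges_cons, List.mem_cons] at he
    rcases he with he | he
    · rcases Sym2.eq_iff.mp he with ⟨-, h2⟩ | ⟨h1, -⟩
      · subst h2
        exact ⟨h', q', rfl⟩
      · exact (h'.ne h1).elim
    · exfalso
      have : v ∈ q'.support := q'.fst_mem_support_of_mem_edges he
      rw [Walk.support_cons, List.nodup_cons] at hnd
      exact hnd.1 this

lemma hasOddCycle_of_oddClosedWalk' :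
    ∀ (N : ℕ) {v : V} (p : G.Walk v v), p.length ≤ N → Odd p.length → HasCycleLen G Odd := by
  intro N
  induction N with
  | zero =>
    intro v p hl ho
    rw [Nat.le_zero] at hl
    rw [hl] at ho
    simp [Nat.odd_iff] at ho
  | succ N ih =>
    intro v p hl ho
    cases p with
    | nil => simp [Nat.odd_iff] at ho
    | cons h q =>
      rename_i w
      rw [Walk.length_cons] at hl ho
      by_cases hnd : q.support.Nodup
      · by_cases he : s(v, w) ∈ q.edges
        · exfalso
          have hnd' : q.reverse.support.Nodup := by
            rw [Walk.support_reverse]; exact List.nodup_reverse.mpr hnd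
          have he' : s(v, w) ∈ q.reverse.edges := by
            rw [Walk.edges_reverse, List.mem_reverse]; exact he
          obtain ⟨h2, r2, hr⟩ := edge_start_of_path q.reverse hnd' he'
          have hr2nd : r2.support.Nodup := by
            rw [hr, Walk.support_cons, List.nodup_cons] at hnd'
            exact hnd'.2
          have hr2 : r2 = Walk.nil := Walk.isPath_iff_eq_nil.mp (Walk.IsPath.mk' hr2nd)
          have hq1 : q.length = 1 := by
            have h5 := congrArg Walk.length hr
            rw [hr2] at h5
            simpa using h5
          rw [hq1] at ho
          simp [Nat.odd_iff] at ho
        · exact ⟨v, Walk.cons h q,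
            Path.cons_isCycle ⟨q, Walk.IsPath.mk' hnd⟩ h he, by rw [Walk.length_cons]; exact ho⟩
      · -- duplicate vertex in q.support
        obtain ⟨u, hu⟩ := List.exists_duplicate_iff_not_nodup.mpr hnd
        have hcount : 2 ≤ q.support.count u := List.duplicate_iff_two_le_count.mp hu
        have hu1 : u ∈ q.support := hu.mem
        have hspec := q.take_spec hu1
        have hcnt2 : 1 ≤ (q.dropUntil u hu1).support.tail.count u := by
          have h6 := congrArg (fun (r : G.Walk w v) => r.support.count u) hspec
          simp only [Walk.support_append, List.count_append] at h6
          rw [q.count_support_takeUntil_eq_one hu1] at h6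
          omega
        set q2 := q.dropUntil u hu1 with hq2
        have hmem : u ∈ q2.support.tail := List.count_pos_iff.mp (by omega)
        have hnn : ¬ q2.Nil := by
          intro hnil
          rw [Walk.nil_iff_support_eq.mp hnil] at hmem
          simp at hmem
        have hu2 : u ∈ q2.tail.support := by
          have h7 := Walk.cons_support_tail hnn
          have : q2.support.tail = q2.tail.support := by rw [← h7]; simp
          rwa [this] at hmem
        have hadj : G.Adj u (q2.getVert 1) := q2.adj_snd hnn
        set q3 := q2.tail with hq3
        set c1 : G.Walk u u := Walk.cons hadj (q3.takeUntil u hu2) with hc1def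
        set q4 := q3.dropUntil u hu2 with hq4
        set c2 : G.Walk v v := (Walk.cons h (q.takeUntil u hu1)).append q4 with hc2def
        have hl3 : (q3.takeUntil u hu2).length + q4.length = q3.length := by
          have h8 := congrArg Walk.length (q3.take_spec hu2)
          rw [Walk.length_append, ← hq4] at h8
          omega
        have hl2 : q3.length + 1 = q2.length := Walk.length_tail_add_one hnn
        have hlq : (q.takeUntil u hu1).length + q2.length = q.length := by
          have h9 := congrArg Walk.length hspec
          rw [Walk.length_append] at h9
          omega
        have hc1 : c1.length = (q3.takeUntil u hu2).length + 1 := by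
          rw [hc1def, Walk.length_cons]
        have hc2 : c2.length = (q.takeUntil u hu1).length + q4.length + 1 := by
          rw [hc2def, Walk.length_append, Walk.length_cons]
          omega
        rcases Nat.even_or_odd c1.length with hpar | hpar
        · have hodd : Odd c2.length := by
            rw [Nat.odd_iff] at ho ⊢
            rw [Nat.even_iff] at hpar
            omega
          exact ih c2 (by omega) hodd
        · exact ih c1 (by omega) hpar

lemma hasOddCycle_of_oddClosedWalk {v : V} (p : G.Walk v v) (ho : Odd p.length) :
    HasCycleLen G Odd :=
  hasOddCycle_of_oddClosedWalk' p.length p le_rfl ho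

lemma support_eq_map_getVert {u v : V} (p : G.Walk u v) :
    p.support = (List.range (p.length + 1)).map p.getVert := by
  induction p with
  | nil => simp [SimpleGraph.Walk.getVert]
  | cons h q ih =>
    simp only [Walk.support_cons, Walk.length_cons, List.range_succ_eq_map, List.map_cons,
      List.map_map, Walk.getVert_zero, Function.comp_def, Walk.getVert_cons_succ, ih]

lemma edges_eq_map_getVert {u v : V} (p : G.Walk u v) :
    p.edges = (List.range p.length).map (fun i => s(p.getVert i, p.getVert (i+1))) := by
  induction p with
  | nil => simp
  | cons h q ih =>
    simp only [Walk.edges_cons, Walk.length_cons, List.range_succ_eq_map, List.map_cons,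
      List.map_map, Walk.getVert_zero, Function.comp_def, Walk.getVert_cons_succ, ih]

lemma mem_edges_iff {u v : V} (p : G.Walk u v) {e : Sym2 V} :
    e ∈ p.edges ↔ ∃ i < p.length, e = s(p.getVert i, p.getVert (i+1)) := by
  rw [edges_eq_map_getVert]
  simp [eq_comm]

lemma getVert_injOn {u v : V} {p : G.Walk u v} (hp : p.IsPath) {i j : ℕ}
    (hi : i ≤ p.length) (hj : j ≤ p.length) (hij : p.getVert i = p.getVert j) : i = j := by
  have hnd := hp.support_nodup
  rw [support_eq_map_getVert] at hnd
  have := List.inj_on_of_nodup_map hnd (x := i) (y := j)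
  simp only [List.mem_range] at this
  exact this (by omega) (by omega) hij


/-- A `Bool` coloring from a crossing set. -/
def crossColoring (A : Finset V) (hX : ∀ ⦃u v⦄, G.Adj u v → ((u ∈ A) ↔ (v ∉ A))) :
    G.Coloring Bool :=
  Coloring.mk (fun v => decide (v ∈ A)) (by
    intro u v huv
    have := hX huv
    simp only [ne_eq, decide_eq_decide]
    tauto)

lemma even_walk_iff {A : Finset V} (hX : ∀ ⦃u v⦄, G.Adj u v → ((u ∈ A) ↔ (v ∉ A)))
    {x y : V} (p : G.Walk x y) : Even p.length ↔ ((x ∈ A) ↔ (y ∈ A)) := by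
  have h0 := (crossColoring A hX).even_length_iff_congr p
  have hx : (crossColoring A hX) x = decide (x ∈ A) := rfl
  have hy : (crossColoring A hX) y = decide (y ∈ A) := rfl
  rw [hx, hy] at h0
  simpa [decide_eq_true_eq] using h0

lemma no_odd_cycle {A : Finset V} (hX : ∀ ⦃u v⦄, G.Adj u v → ((u ∈ A) ↔ (v ∉ A))) :
    ¬ HasCycleLen G Odd := by
  rintro ⟨v, c, -, hodd⟩
  have heven : Even c.length := (even_walk_iff hX c).mpr Iff.rfl
  exact (Nat.not_even_iff_odd.mpr hodd) heven

lemma preconnected_of_ham_walk {x y : V} (p : G.Walk x y) (h : ∀ v, v ∈ p.support) :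
    G.Preconnected := fun a b =>
  ((p.takeUntil a (h a)).reachable.symm).trans (p.takeUntil b (h b)).reachable

lemma exists_class {n k : ℕ} (hn : n = 2*k+1) (G : SimpleGraph (Fin n))
    (h : IsHamPathGraph G) :
    ∃ A : Finset (Fin n), A.card = k+1 ∧ ∀ ⦃u v⦄, G.Adj u v → ((u ∈ A) ↔ (v ∉ A)) := by
  obtain ⟨u, v, p, hham, hedge⟩ := h
  have hpath : p.IsPath := hham.isPath
  have hlen : p.length = 2*k := by
    rw [hham.length_eq, Fintype.card_fin]
    omega
  set A : Finset (Fin n) := (Finset.range (k+1)).image (fun i => p.getVert (2*i)) with hA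
  have hmemA : ∀ j, j ≤ 2*k → (p.getVert j ∈ A ↔ Even j) := by
    intro j hj
    constructor
    · intro hmem
      rw [hA, Finset.mem_image] at hmem
      obtain ⟨i, hi, hgi⟩ := hmem
      rw [Finset.mem_range] at hi
      have := getVert_injOn hpath (by omega : 2*i ≤ p.length) (by omega : j ≤ p.length) hgi
      exact ⟨i, by omega⟩
    · intro hev
      rw [hA, Finset.mem_image]
      refine ⟨j/2, Finset.mem_range.mpr (by omega), ?_⟩
      congr 1
      obtain ⟨m, hm⟩ := hev
      omega
  refine ⟨A, ?_, ?_⟩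
  · rw [hA]
    rw [Finset.card_image_of_injOn, Finset.card_range]
    intro i hi j hj hij
    simp only [Finset.coe_range, Set.mem_Iio] at hi hj
    have := getVert_injOn hpath (by omega : 2*i ≤ p.length) (by omega : 2*j ≤ p.length) hij
    omega
  · intro a b hab
    have he : s(a, b) ∈ p.edges := by
      have : s(a, b) ∈ G.edgeSet := hab
      rw [hedge] at this
      exact this
    rw [mem_edges_iff] at he
    obtain ⟨i, hi, hei⟩ := he
    have h1 := hmemA i (by omega)
    have h2 := hmemA (i+1) (by omega)
    rcases Sym2.eq_iff.mp hei with ⟨ha, hb⟩ | ⟨ha, hb⟩ <;> subst ha <;> subst hb <;>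
      rw [h1, h2, Nat.even_add_one] <;> tauto


lemma upper_bound {n k : ℕ} (hn : n = 2*k+1) (F : Set (SimpleGraph (Fin n)))
    (h1 : ∀ G ∈ F, IsHamPathGraph G)
    (h2 : ∀ G ∈ F, ∀ H ∈ F, G ≠ H → HasCycleLen (G ⊔ H) Odd) :
    F.ncard ≤ n.choose (k+1) := by
  classical
  set φ : SimpleGraph (Fin n) → Finset (Fin n) :=
    fun G => if h : IsHamPathGraph G then (exists_class hn G h).choose else ∅ with hφ
  have hspec : ∀ G ∈ F, (φ G).card = k+1 ∧ ∀ ⦃u v⦄, G.Adj u v → ((u ∈ φ G) ↔ (v ∉ φ G)) := by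
    intro G hG
    have h := h1 G hG
    have : φ G = (exists_class hn G h).choose := by rw [hφ]; simp only [dif_pos h]
    rw [this]
    exact (exists_class hn G h).choose_spec
  have hle : F.ncard ≤ (↑(Finset.powersetCard (k+1) (Finset.univ : Finset (Fin n))) :
      Set (Finset (Fin n))).ncard := by
    apply Set.ncard_le_ncard_of_injOn φ
    · intro G hG
      rw [Finset.mem_coe, Finset.mem_powersetCard_univ]
      exact (hspec G hG).1
    · intro G hG H hH hGH
      by_contra hne
      have hodd := h2 G hG H hH hne
      apply no_odd_cycle (A := φ G) ?_ hodd
      intro u v huv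
      rcases huv with huv | huv
      · exact (hspec G hG).2 huv
      · rw [hGH]
        exact (hspec H hH).2 huv
  rw [Set.ncard_coe_finset, Finset.card_powersetCard, Finset.card_univ, Fintype.card_fin] at hle
  exact hle


lemma support_eq_map_getVert_placeholder : True := trivial

section Construction

lemma hamPath_preconnected {n : ℕ} {G : SimpleGraph (Fin n)}
    (h : IsHamPathGraph G) : G.Preconnected := by
  obtain ⟨u, v, p, hham, -⟩ := h
  exact preconnected_of_ham_walk p hham.mem_support

variable {k : ℕ}

/-- The alternating enumeration associated to `A`. -/
def seq (k : ℕ) (A : Finset (Fin (2*k+1))) (i : ℕ) : Fin (2*k+1) :=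
  if Even i then (A.sort (· ≤ ·)).getD (i/2) ⟨0, Nat.succ_pos _⟩
  else ((Aᶜ).sort (· ≤ ·)).getD (i/2) ⟨0, Nat.succ_pos _⟩

variable {A B : Finset (Fin (2*k+1))}

lemma card_compl' (hA : A.card = k+1) : (Aᶜ).card = k := by
  rw [Finset.card_compl, Fintype.card_fin, hA]
  omega

lemma seq_mem (hA : A.card = k+1) {i : ℕ} (hi : i < 2*k+1) : (seq k A i ∈ A ↔ Even i) := by
  unfold seq
  by_cases he : Even i
  · rw [if_pos he]
    have hlen : (A.sort (· ≤ ·)).length = k+1 := by rw [Finset.length_sort, hA]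
    have hlt : i/2 < (A.sort (· ≤ ·)).length := by rw [hlen]; omega
    rw [List.getD_eq_getElem _ _ hlt]
    simp only [he, iff_true]
    exact (Finset.mem_sort (· ≤ ·)).mp (List.getElem_mem _)
  · rw [if_neg he]
    have hlen : ((Aᶜ).sort (· ≤ ·)).length = k := by rw [Finset.length_sort, card_compl' hA]
    rw [Nat.not_even_iff] at he
    have hlt : i/2 < ((Aᶜ).sort (· ≤ ·)).length := by rw [hlen]; omega
    rw [List.getD_eq_getElem _ _ hlt]
    have hmem : ((Aᶜ).sort (· ≤ ·))[i/2] ∈ Aᶜ := (Finset.mem_sort (· ≤ ·)).mp (List.getElem_mem _)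
    rw [Finset.mem_compl] at hmem
    simp only [hmem, false_iff]
    rw [Nat.even_iff]
    omega

lemma seq_injOn (hA : A.card = k+1) {i j : ℕ} (hi : i < 2*k+1) (hj : j < 2*k+1)
    (hij : seq k A i = seq k A j) : i = j := by
  have hpar : Even i ↔ Even j := by
    rw [← seq_mem hA hi, ← seq_mem hA hj, hij]
  by_cases he : Even i
  · have hej : Even j := hpar.mp he
    unfold seq at hij
    rw [if_pos he, if_pos hej] at hij
    have hlen : (A.sort (· ≤ ·)).length = k+1 := by rw [Finset.length_sort, hA]
    have hi2 : i/2 < (A.sort (· ≤ ·)).length := by rw [hlen]; omega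
    have hj2 : j/2 < (A.sort (· ≤ ·)).length := by rw [hlen]; omega
    rw [List.getD_eq_getElem _ _ hi2, List.getD_eq_getElem _ _ hj2] at hij
    have := (Finset.sort_nodup (s := A) (r := (· ≤ ·))).getElem_inj_iff.mp hij
    rw [Nat.even_iff] at he hej
    omega
  · have hej : ¬ Even j := fun h => he (hpar.mpr h)
    unfold seq at hij
    rw [if_neg he, if_neg hej] at hij
    have hlen : ((Aᶜ).sort (· ≤ ·)).length = k := by rw [Finset.length_sort, card_compl' hA]
    rw [Nat.not_even_iff] at he hej
    have hi2 : i/2 < ((Aᶜ).sort (· ≤ ·)).length := by rw [hlen]; omega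
    have hj2 : j/2 < ((Aᶜ).sort (· ≤ ·)).length := by rw [hlen]; omega
    rw [List.getD_eq_getElem _ _ hi2, List.getD_eq_getElem _ _ hj2] at hij
    have := (Finset.sort_nodup (s := Aᶜ) (r := (· ≤ ·))).getElem_inj_iff.mp hij
    omega

lemma seq_surj (hA : A.card = k+1) (v : Fin (2*k+1)) : ∃ i < 2*k+1, seq k A i = v := by
  by_cases hv : v ∈ A
  · have hv' : v ∈ A.sort (· ≤ ·) := (Finset.mem_sort (· ≤ ·)).mpr hv
    obtain ⟨j, hj, hjv⟩ := List.mem_iff_getElem.mp hv'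
    rw [Finset.length_sort, hA] at hj
    refine ⟨2*j, by omega, ?_⟩
    unfold seq
    rw [if_pos ⟨j, by omega⟩]
    have h2 : 2*j/2 = j := by omega
    rw [h2, List.getD_eq_getElem _ _ (by rw [Finset.length_sort, hA]; omega)]
    exact hjv
  · have hv' : v ∈ (Aᶜ).sort (· ≤ ·) := (Finset.mem_sort (· ≤ ·)).mpr (Finset.mem_compl.mpr hv)
    obtain ⟨j, hj, hjv⟩ := List.mem_iff_getElem.mp hv'
    rw [Finset.length_sort, card_compl' hA] at hj
    refine ⟨2*j+1, by omega, ?_⟩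
    unfold seq
    rw [if_neg (by rw [Nat.even_iff]; omega)]
    have h2 : (2*j+1)/2 = j := by omega
    rw [h2, List.getD_eq_getElem _ _ (by rw [Finset.length_sort, card_compl' hA]; omega)]
    exact hjv

/-- The alternating Hamiltonian path graph associated to `A`. -/
def constrG (k : ℕ) (A : Finset (Fin (2*k+1))) : SimpleGraph (Fin (2*k+1)) :=
  fromEdgeSet {e | ∃ i, i < 2*k ∧ e = s(seq k A i, seq k A (i+1))}

lemma constrG_cross (hA : A.card = k+1) :
    ∀ ⦃u v⦄, (constrG k A).Adj u v → ((u ∈ A) ↔ (v ∉ A)) := by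
  intro u v huv
  rw [constrG, fromEdgeSet_adj] at huv
  obtain ⟨⟨i, hi, hei⟩, hne⟩ := huv
  have h1 := seq_mem hA (i := i) (by omega)
  have h2 := seq_mem hA (i := i+1) (by omega)
  rcases Sym2.eq_iff.mp hei with ⟨ha, hb⟩ | ⟨ha, hb⟩ <;> subst ha <;> subst hb <;>
    rw [h1, h2, Nat.even_add_one] <;> tauto

lemma constrG_adj (hA : A.card = k+1) {i : ℕ} (hi : i < 2*k) :
    (constrG k A).Adj (seq k A i) (seq k A (i+1)) := by
  rw [constrG, fromEdgeSet_adj]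
  refine ⟨⟨i, hi, rfl⟩, ?_⟩
  intro hcon
  have h1 := seq_mem hA (i := i) (by omega)
  have h2 := seq_mem hA (i := i+1) (by omega)
  rw [hcon, h2, Nat.even_add_one] at h1
  tauto

lemma constrG_isHamPath (hA : A.card = k+1) : IsHamPathGraph (constrG k A) := by
  have hadj : ∀ i, i < 2*k → (constrG k A).Adj (seq k A i) (seq k A (i+1)) :=
    fun i hi => constrG_adj hA hi
  set w := buildWalk (seq k A) (2*k) hadj with hw
  have hsupp : w.support = (List.range (2*k+1)).map (seq k A) := buildWalk_support _ _ _
  have hmem : ∀ v, v ∈ w.support := by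
    intro v
    rw [hsupp]
    obtain ⟨i, hi, hfi⟩ := seq_surj hA v
    exact List.mem_map.mpr ⟨i, List.mem_range.mpr hi, hfi⟩
  have hnd : w.support.Nodup := by
    rw [hsupp]
    refine List.Nodup.map_on ?_ List.nodup_range
    intro i hi j hj hij
    rw [List.mem_range] at hi hj
    exact seq_injOn hA hi hj hij
  have hham : w.IsHamiltonian := (Walk.IsPath.mk' hnd).isHamiltonian_of_mem hmem
  refine ⟨seq k A 0, seq k A (2*k), w, hham, ?_⟩
  have hedges : w.edges = (List.range (2*k)).map (fun i => s(seq k A i, seq k A (i+1))) :=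
    buildWalk_edges _ _ _
  ext e
  rw [Set.mem_setOf_eq, hedges, constrG, edgeSet_fromEdgeSet]
  constructor
  · rintro ⟨⟨i, hi, hei⟩, -⟩
    exact List.mem_map.mpr ⟨i, List.mem_range.mpr hi, hei.symm⟩
  · intro hme
    obtain ⟨i, hir, hei⟩ := List.mem_map.mp hme
    rw [List.mem_range] at hir
    refine ⟨⟨i, hir, hei.symm⟩, ?_⟩
    simp only [Set.mem_setOf_eq, ← hei, Sym2.isDiag_iff_proj_eq]
    exact (constrG_adj hA hir).ne

lemma inter_nonempty (hA : A.card = k+1) (hB : B.card = k+1) : (A ∩ B).Nonempty := by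
  rw [← Finset.card_pos]
  have h1 := Finset.card_inter_add_card_union A B
  have h2 : (A ∪ B).card ≤ 2*k+1 := by
    have h3 := Finset.card_le_univ (A ∪ B)
    have h4 : Fintype.card (Fin (2*k+1)) = 2*k+1 := Fintype.card_fin _
    omega
  omega

lemma constrG_injective (hA : A.card = k+1) (hB : B.card = k+1)
    (h : constrG k A = constrG k B) : A = B := by
  obtain ⟨u, hu⟩ := inter_nonempty hA hB
  rw [Finset.mem_inter] at hu
  have hXB : ∀ ⦃x y⦄, (constrG k A).Adj x y → ((x ∈ B) ↔ (y ∉ B)) := by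
    rw [h]; exact constrG_cross hB
  ext v
  obtain ⟨p⟩ := (constrG_isHamPath hA |> hamPath_preconnected) u v
  have e1 := even_walk_iff (constrG_cross hA) p
  have e2 := even_walk_iff hXB p
  rw [e1] at e2
  simp only [hu.1, hu.2, true_iff, iff_true] at e2 ⊢
  tauto

lemma constrG_oddCycle (hA : A.card = k+1) (hB : B.card = k+1) (hne : A ≠ B) :
    HasCycleLen (constrG k A ⊔ constrG k B) Odd := by
  have hx : (A \ B).Nonempty := by
    rw [Finset.sdiff_nonempty]
    intro hsub
    exact hne (Finset.eq_of_subset_of_card_le hsub (by rw [hA, hB]))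
  obtain ⟨x, hx⟩ := hx
  rw [Finset.mem_sdiff] at hx
  obtain ⟨y, hy⟩ := inter_nonempty hA hB
  rw [Finset.mem_inter] at hy
  obtain ⟨p1⟩ := (constrG_isHamPath hA |> hamPath_preconnected) x y
  obtain ⟨p2⟩ := (constrG_isHamPath hB |> hamPath_preconnected) y x
  have e1 : Even p1.length := (even_walk_iff (constrG_cross hA) p1).mpr (by tauto)
  have e2 : Odd p2.length := by
    rw [Nat.odd_iff, ← Nat.not_even_iff]
    intro hev
    have := (even_walk_iff (constrG_cross hB) p2).mp hev
    tauto
  set c : (constrG k A ⊔ constrG k B).Walk x x :=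
    (p1.mapLe le_sup_left).append (p2.mapLe le_sup_right) with hc
  apply hasOddCycle_of_oddClosedWalk c
  rw [hc, Walk.length_append]
  have l1 : (p1.mapLe (le_sup_left : constrG k A ≤ constrG k A ⊔ constrG k B)).length = p1.length := by
    simp [Walk.mapLe]
  have l2 : (p2.mapLe (le_sup_right : constrG k B ≤ constrG k A ⊔ constrG k B)).length = p2.length := by
    simp [Walk.mapLe]
  rw [l1, l2]
  rcases e1 with ⟨m, hm⟩
  rcases e2 with ⟨m', hm'⟩
  exact ⟨m + m', by omega⟩

end Construction

end OddHam

theorem stmt4 {n : ℕ} (hn : Odd n) :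
    IsGreatest {m : ℕ | ∃ F : Set (SimpleGraph (Fin n)),
      (∀ G ∈ F, IsHamPathGraph G) ∧
      (∀ G ∈ F, ∀ H ∈ F, G ≠ H → HasCycleLen (G ⊔ H) Odd) ∧
      F.ncard = m} (n.choose (n / 2)) := by
  obtain ⟨k, hk⟩ := hn
  subst hk
  have hdiv : (2*k+1)/2 = k := by omega
  have hch : (2*k+1).choose (k+1) = (2*k+1).choose k := by
    have h0 := Nat.choose_symm (n := 2*k+1) (k := k+1) (by omega)
    have h2 : 2*k+1-(k+1) = k := by omega
    rw [h2] at h0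
    exact h0.symm
  constructor
  · refine ⟨(OddHam.constrG k) '' {A : Finset (Fin (2*k+1)) | A.card = k+1}, ?_, ?_, ?_⟩
    · rintro G ⟨A, hA, rfl⟩
      exact OddHam.constrG_isHamPath hA
    · rintro G ⟨A, hA, rfl⟩ H ⟨B, hB, rfl⟩ hne
      exact OddHam.constrG_oddCycle hA hB (fun h => hne (by rw [h]))
    · have hinj : Set.InjOn (OddHam.constrG k) {A : Finset (Fin (2*k+1)) | A.card = k+1} :=
        fun A hA B hB h => OddHam.constrG_injective hA hB h
      rw [Set.ncard_image_of_injOn hinj]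
      have hset : {A : Finset (Fin (2*k+1)) | A.card = k+1} =
          ↑(Finset.powersetCard (k+1) (Finset.univ : Finset (Fin (2*k+1)))) := by
        ext A
        simp [Finset.mem_powersetCard_univ]
      rw [hset, Set.ncard_coe_finset, Finset.card_powersetCard, Finset.card_univ,
        Fintype.card_fin, hdiv, hch]
  · rintro m ⟨F, h1, h2, rfl⟩
    have hub := OddHam.upper_bound rfl F h1 h2
    rw [hdiv, ← hch]
    exact hub
end

section
/- For n even, the maximum cardinality of a family of Hamiltonian paths in K_n such that the union of any two distinct members contains an odd cycle equals (1/2) * binomial(n, n/2). -/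
set_option maxHeartbeats 1000000


open SimpleGraph

lemma oddCycle_of_oddClosedWalk {V : Type*} [DecidableEq V] {G : SimpleGraph V} :
    ∀ (L : ℕ) {v : V} (w : G.Walk v v), w.length = L → Odd L → HasCycleLen G Odd := by
  intro L
  induction L using Nat.strong_induction_on with
  | _ L ih =>
    intro v w hw hodd
    by_cases hnd : w.support.tail.Nodup
    · -- w is (essentially) a cycle
      cases w with
      | nil =>
        rw [Walk.length_nil] at hw
        rw [← hw] at hodd
        exact absurd hodd (by decide)
      | cons h q =>
        rename_i u
        -- h : G.Adj v u, q : G.Walk u v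
        rw [Walk.support_cons, List.tail_cons] at hnd
        by_cases hq : s(v, u) ∈ q.edges
        · -- then q has length 1, so w has length 2, contradicting oddness
          cases q with
          | nil => exact absurd h (G.loopless.irrefl v)
          | cons h' q' =>
            rename_i x
            rw [Walk.edges_cons, List.mem_cons] at hq
            rcases hq with hq | hq
            · rcases Sym2.eq_iff.mp hq with ⟨h1, h2⟩ | ⟨h1, h2⟩
              · exact absurd h1 (G.ne_of_adj h)
              · subst h1
                have hp' : q'.IsPath := by
                  rw [Walk.isPath_def]
                  rw [Walk.support_cons] at hnd
                  exact hnd.of_cons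
                rw [Walk.isPath_iff_eq_nil] at hp'
                subst hp'
                rw [Walk.length_cons, Walk.length_cons, Walk.length_nil] at hw
                subst hw
                exact absurd hodd (by decide)
            · have hu : u ∈ q'.support := q'.snd_mem_support_of_mem_edges hq
              rw [Walk.support_cons, List.nodup_cons] at hnd
              exact absurd hu hnd.1
        · refine ⟨v, Walk.cons h q, ?_, hw ▸ hodd⟩
          rw [Walk.cons_isCycle_iff]
          exact ⟨(Walk.isPath_def _).mpr hnd, hq⟩
    · -- there is a repeated vertex; split into two shorter closed walks
      obtain ⟨x, hx⟩ := List.exists_duplicate_iff_not_nodup.mpr hnd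
      have hcount : 2 ≤ w.support.tail.count x := List.duplicate_iff_two_le_count.mp hx
      have hxs : x ∈ w.support := by
        rw [w.support_eq_cons]
        exact List.mem_cons_of_mem _ hx.mem
      have hspec : (w.takeUntil x hxs).append (w.dropUntil x hxs) = w := w.take_spec hxs
      have hsupp : w.support = (w.takeUntil x hxs).support ++ (w.dropUntil x hxs).support.tail := by
        conv_lhs => rw [← hspec]
        exact Walk.support_append _ _
      have hlen : (w.takeUntil x hxs).length + (w.dropUntil x hxs).length = L := by
        have h' := congrArg Walk.length hspec
        rw [Walk.length_append] at h'
        omega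
      have hc1 : (w.takeUntil x hxs).support.count x = 1 := w.count_support_takeUntil_eq_one hxs
      have hcw : 2 ≤ w.support.count x := by
        rw [w.support_eq_cons, List.count_cons]
        omega
      have hc2 : 1 ≤ (w.dropUntil x hxs).support.tail.count x := by
        rw [hsupp, List.count_append] at hcw
        omega
      have hnil2 : ¬(w.dropUntil x hxs).Nil := by
        intro hN
        rw [Walk.nil_iff_support_eq] at hN
        rw [hN] at hc2
        simp at hc2
      obtain ⟨y, h2, r, hr⟩ := Walk.not_nil_iff.mp hnil2
      have hxr : x ∈ r.support := by
        have := hc2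
        rw [hr, Walk.support_cons, List.tail_cons] at this
        exact List.count_pos_iff.mp (by omega)
      have hrspec : (r.takeUntil x hxr).append (r.dropUntil x hxr) = r := r.take_spec hxr
      have hrlen : (r.takeUntil x hxr).length + (r.dropUntil x hxr).length = r.length := by
        have h' := congrArg Walk.length hrspec
        rw [Walk.length_append] at h'
        omega
      have hlen2 : (w.dropUntil x hxs).length = r.length + 1 := by
        rw [hr, Walk.length_cons]
      -- the two closed walks
      let c1 : G.Walk x x := Walk.cons h2 (r.takeUntil x hxr)
      let c2 : G.Walk x x := (r.dropUntil x hxr).append (w.takeUntil x hxs)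
      have hc1len : c1.length = (r.takeUntil x hxr).length + 1 := Walk.length_cons _ _
      have hc2len : c2.length = (r.dropUntil x hxr).length + (w.takeUntil x hxs).length :=
        Walk.length_append _ _
      have hsum : c1.length + c2.length = L := by omega
      -- c2 has positive length
      have hc2pos : 0 < c2.length := by
        rcases Nat.eq_zero_or_pos (w.takeUntil x hxs).length with h0 | hpos
        · -- then x = v, and x appears at least 3 times in w.support
          have hxv : v = x := Walk.eq_of_length_eq_zero h0
          have hcw3 : 3 ≤ w.support.count x := by
            rw [w.support_eq_cons, List.count_cons]
            simp [hxv]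
            omega
          have hc2' : 2 ≤ (w.dropUntil x hxs).support.tail.count x := by
            rw [hsupp, List.count_append] at hcw3
            omega
          have hc2r : 2 ≤ r.support.count x := by
            rw [hr, Walk.support_cons, List.tail_cons] at hc2'
            exact hc2'
          have hrsupp : r.support = (r.takeUntil x hxr).support ++ (r.dropUntil x hxr).support.tail := by
            conv_lhs => rw [← hrspec]
            exact Walk.support_append _ _
          have hcr1 : (r.takeUntil x hxr).support.count x = 1 := r.count_support_takeUntil_eq_one hxr
          have : 1 ≤ (r.dropUntil x hxr).support.tail.count x := by
            rw [hrsupp, List.count_append] at hc2r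
            omega
          have : ¬(r.dropUntil x hxr).Nil := by
            intro hN
            rw [Walk.nil_iff_support_eq] at hN
            rw [hN] at this
            simp at this
          rw [Walk.not_nil_iff_lt_length] at this
          omega
        · omega
      have hc1pos : 0 < c1.length := by omega
      have hoo : Odd c1.length ∨ Odd c2.length := by
        rcases Nat.even_or_odd c1.length with he | ho
        · rcases Nat.even_or_odd c2.length with he2 | ho2
          · exfalso
            have hcon := hodd
            rw [← hsum] at hcon
            rcases he with ⟨a, ha⟩; rcases he2 with ⟨b, hb⟩
            rw [Nat.odd_iff] at hcon
            omega
          · exact Or.inr ho2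
        · exact Or.inl ho
      rcases hoo with ho1 | ho2
      · exact ih c1.length (by omega) c1 rfl ho1
      · exact ih c2.length (by omega) c2 rfl ho2



-- edges of a walk, as consecutive entries of the support
lemma walk_edges_eq {V : Type*} [Inhabited V] {G : SimpleGraph V} :
    ∀ {u v : V} (p : G.Walk u v), p.edges =
      (List.range p.length).map
        (fun i => s(p.support.getD i default, p.support.getD (i+1) default)) := by
  intro u v p
  induction p with
  | nil => simp
  | cons h q ih =>
    rename_i a b c
    rw [Walk.edges_cons, Walk.length_cons, Walk.support_cons, ih,
      List.range_succ_eq_map, List.map_cons, List.map_map]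
    congr 1
    rw [q.support_eq_cons]
    rfl

-- count of evens below n
lemma evens_card (n : ℕ) : ((Finset.range n).filter (fun i => i % 2 = 0)).card = (n+1)/2 := by
  induction n with
  | zero => simp
  | succ m ih =>
    rw [Finset.range_add_one, Finset.filter_insert]
    by_cases h : m % 2 = 0
    · rw [if_pos h, Finset.card_insert_of_notMem (by simp), ih]
      omega
    · rw [if_neg h, ih]
      omega

lemma card_filter_even_fin (n : ℕ) (hn : n % 2 = 0) :
    (Finset.univ.filter (fun x : Fin n => (x : ℕ) % 2 = 0)).card = n / 2 := by
  have := evens_card n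
  rw [show (n+1)/2 = n/2 by omega] at this
  rw [← this]
  apply Finset.card_bij (fun (x : Fin n) _ => (x : ℕ))
  · intro a ha
    rw [Finset.mem_filter] at ha ⊢
    exact ⟨Finset.mem_range.mpr a.isLt, ha.2⟩
  · intro a _ b _ h
    exact Fin.val_injective h
  · intro b hb
    rw [Finset.mem_filter, Finset.mem_range] at hb
    exact ⟨⟨b, hb.1⟩, Finset.mem_filter.mpr ⟨Finset.mem_univ _, hb.2⟩, rfl⟩




@[reducible] def consecGraph (n : ℕ) (g : ℕ → Fin n) : SimpleGraph (Fin n) where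
  Adj x y := x ≠ y ∧ ∃ i, i + 1 < n ∧ ((x = g i ∧ y = g (i+1)) ∨ (y = g i ∧ x = g (i+1)))
  symm := by
    refine ⟨?_⟩
    rintro x y ⟨hne, i, hi, h⟩
    exact ⟨hne.symm, i, hi, by tauto⟩
  loopless := ⟨fun x h => h.1 rfl⟩

variable {n : ℕ} {g : ℕ → Fin n}

def consecWalk (hg1 : ∀ i j, i < n → j < n → g i = g j → i = j) :
    (m : ℕ) → m < n → (consecGraph n g).Walk (g m) (g 0)
  | 0, _ => Walk.nil
  | (m+1), h => Walk.cons
      ⟨fun he => by exact absurd (hg1 (m+1) m h (by omega) he) (by omega),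
        m, h, Or.inr ⟨rfl, rfl⟩⟩
      (consecWalk hg1 m (by omega))

lemma consecWalk_support (hg1 : ∀ i j, i < n → j < n → g i = g j → i = j) :
    ∀ (m : ℕ) (h : m < n), (consecWalk hg1 m h).support = ((List.range (m+1)).reverse).map g := by
  intro m
  induction m with
  | zero => intro h; rfl
  | succ k ih =>
    intro h
    rw [consecWalk, Walk.support_cons, ih (by omega)]
    simp [List.range_succ]

lemma consecWalk_length (hg1 : ∀ i j, i < n → j < n → g i = g j → i = j) :
    ∀ (m : ℕ) (h : m < n), (consecWalk hg1 m h).length = m := by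
  intro m
  induction m with
  | zero => intro h; rfl
  | succ k ih => intro h; rw [consecWalk, Walk.length_cons, ih (by omega)]

lemma consecWalk_edges (hg1 : ∀ i j, i < n → j < n → g i = g j → i = j) :
    ∀ (m : ℕ) (h : m < n), (consecWalk hg1 m h).edges =
      ((List.range m).reverse).map (fun i => s(g (i+1), g i)) := by
  intro m
  induction m with
  | zero => intro h; rfl
  | succ k ih =>
    intro h
    rw [consecWalk, Walk.edges_cons, ih (by omega), List.range_succ, List.reverse_append]
    simp

lemma consec_isHamPathGraph (hn : 0 < n)
    (hg1 : ∀ i j, i < n → j < n → g i = g j → i = j)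
    (hg2 : ∀ y, ∃ i, i < n ∧ g i = y) :
    IsHamPathGraph (consecGraph n g) := by
  refine ⟨g (n-1), g 0, consecWalk hg1 (n-1) (by omega), ?_, ?_⟩
  · apply Walk.IsPath.isHamiltonian_of_mem
    · rw [Walk.isPath_def, consecWalk_support]
      apply List.Nodup.map_on
      · intro i hi j hj hij
        simp only [List.mem_reverse, List.mem_range] at hi hj
        exact hg1 i j (by omega) (by omega) hij
      · exact List.nodup_reverse.mpr List.nodup_range
    · intro w
      obtain ⟨i, hi, hgi⟩ := hg2 w
      rw [consecWalk_support]
      apply List.mem_map.mpr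
      exact ⟨i, by simp; omega, hgi⟩
  · ext e
    induction e with
    | _ x y =>
      simp only [mem_edgeSet, Set.mem_setOf_eq]
      rw [consecWalk_edges]
      constructor
      · rintro ⟨hne, i, hi, hor⟩
        have hmem : s(g (i+1), g i) ∈ ((List.range (n-1)).reverse).map
            (fun i => s(g (i+1), g i)) :=
          List.mem_map.mpr ⟨i, by simp; omega, rfl⟩
        rcases hor with ⟨hx, hy⟩ | ⟨hy, hx⟩
        · rw [hx, hy, Sym2.eq_swap]; exact hmem
        · rw [hx, hy]; exact hmem
      · intro he
        obtain ⟨i, hi, hei⟩ := List.mem_map.mp he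
        simp only [List.mem_reverse, List.mem_range] at hi
        have hin : i + 1 < n := by omega
        rcases Sym2.eq_iff.mp hei.symm with ⟨hx, hy⟩ | ⟨hx, hy⟩
        · subst hx; subst hy
          exact ⟨fun he' => absurd (hg1 (i+1) i hin (by omega) he') (by omega),
            i, hin, Or.inr ⟨rfl, rfl⟩⟩
        · subst hx; subst hy
          exact ⟨fun he' => absurd (hg1 i (i+1) (by omega) hin he') (by omega),
            i, hin, Or.inl ⟨rfl, rfl⟩⟩

lemma consec_reachable (hn : 0 < n)
    (hg1 : ∀ i j, i < n → j < n → g i = g j → i = j)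
    (hg2 : ∀ y, ∃ i, i < n ∧ g i = y) (x : Fin n) :
    (consecGraph n g).Reachable (g 0) x := by
  obtain ⟨i, hi, hgi⟩ := hg2 x
  exact hgi ▸ (consecWalk hg1 i hi).reachable.symm

-- alternation of proper colorings along consecGraph
lemma consec_alternate (hg1 : ∀ i j, i < n → j < n → g i = g j → i = j)
    (d : Fin n → Bool) (hd : ∀ x y, (consecGraph n g).Adj x y → d x ≠ d y) :
    ∀ i, i < n → ((d (g i) = d (g 0)) ↔ i % 2 = 0) := by
  intro i
  induction i with
  | zero => simp
  | succ k ih =>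
    intro h
    have hadj : (consecGraph n g).Adj (g k) (g (k+1)) :=
      ⟨fun he => by exact absurd (hg1 k (k+1) (by omega) h he) (by omega),
        k, h, Or.inl ⟨rfl, rfl⟩⟩
    have hne := hd _ _ hadj
    have hk := ih (by omega)
    revert hne hk
    cases d (g k) <;> cases d (g (k+1)) <;> cases d (g 0) <;> simp <;> omega


section Construction

variable {n : ℕ}

/-- the interleaving enumeration attached to a set `A` -/
def gA (hn : 0 < n) (A : Finset (Fin n)) : ℕ → Fin n :=
  fun i => if i % 2 = 0 then (A.sort (· ≤ ·)).getD (i/2) ⟨0, hn⟩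
    else ((Aᶜ).sort (· ≤ ·)).getD (i/2) ⟨0, hn⟩

lemma gA_mem (hn : 0 < n) (hev : n % 2 = 0) {A : Finset (Fin n)} (hA : A.card = n / 2)
    {i : ℕ} (hi : i < n) : (gA hn A i ∈ A ↔ i % 2 = 0) := by
  have hlen : (A.sort (· ≤ ·)).length = n / 2 := by rw [Finset.length_sort, hA]
  have hlenc : ((Aᶜ).sort (· ≤ ·)).length = n / 2 := by
    rw [Finset.length_sort, Finset.card_compl, Fintype.card_fin, hA]; omega
  by_cases h : i % 2 = 0
  · rw [gA, if_pos h]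
    have hi2 : i / 2 < (A.sort (· ≤ ·)).length := by omega
    rw [List.getD_eq_getElem _ _ hi2]
    simp only [h, iff_true]
    exact Finset.mem_sort (α := Fin n) (· ≤ ·) |>.mp (List.getElem_mem hi2)
  · rw [gA, if_neg h]
    have hi2 : i / 2 < ((Aᶜ).sort (· ≤ ·)).length := by omega
    rw [List.getD_eq_getElem _ _ hi2]
    simp only [h, iff_false]
    have := Finset.mem_sort (α := Fin n) (· ≤ ·) |>.mp (List.getElem_mem hi2)
    rw [Finset.mem_compl] at this
    exact this

lemma gA_inj (hn : 0 < n) (hev : n % 2 = 0) {A : Finset (Fin n)} (hA : A.card = n / 2) :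
    ∀ i j, i < n → j < n → gA hn A i = gA hn A j → i = j := by
  have hlen : (A.sort (· ≤ ·)).length = n / 2 := by rw [Finset.length_sort, hA]
  have hlenc : ((Aᶜ).sort (· ≤ ·)).length = n / 2 := by
    rw [Finset.length_sort, Finset.card_compl, Fintype.card_fin, hA]; omega
  intro i j hi hj hij
  by_cases h1 : i % 2 = 0 <;> by_cases h2 : j % 2 = 0
  · simp only [gA, if_pos h1, if_pos h2] at hij
    rw [List.getD_eq_getElem _ _ (by omega : i/2 < _),
      List.getD_eq_getElem _ _ (by omega : j/2 < _)] at hij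
    have := (A.sort_nodup (· ≤ ·)).getElem_inj_iff.mp hij
    omega
  · exfalso
    have hmi := (gA_mem hn hev hA hi).mpr h1
    have hmj := gA_mem hn hev hA hj
    rw [← hij] at hmj
    exact h2 (hmj.mp hmi)
  · exfalso
    have hmj := (gA_mem hn hev hA hj).mpr h2
    have hmi := gA_mem hn hev hA hi
    rw [hij] at hmi
    exact h1 (hmi.mp hmj)
  · simp only [gA, if_neg h1, if_neg h2] at hij
    rw [List.getD_eq_getElem _ _ (by omega : i/2 < _),
      List.getD_eq_getElem _ _ (by omega : j/2 < _)] at hij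
    have := ((Aᶜ).sort_nodup (· ≤ ·)).getElem_inj_iff.mp hij
    omega

lemma gA_surj (hn : 0 < n) (hev : n % 2 = 0) {A : Finset (Fin n)} (hA : A.card = n / 2) :
    ∀ y, ∃ i, i < n ∧ gA hn A i = y := by
  have hlen : (A.sort (· ≤ ·)).length = n / 2 := by rw [Finset.length_sort, hA]
  have hlenc : ((Aᶜ).sort (· ≤ ·)).length = n / 2 := by
    rw [Finset.length_sort, Finset.card_compl, Fintype.card_fin, hA]; omega
  intro y
  by_cases hy : y ∈ A
  · have : y ∈ A.sort (· ≤ ·) := Finset.mem_sort (α := Fin n) (· ≤ ·) |>.mpr hy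
    obtain ⟨j, hj, hjy⟩ := List.mem_iff_getElem.mp this
    refine ⟨2 * j, by omega, ?_⟩
    rw [gA, if_pos (by omega), List.getD_eq_getElem _ _ (by omega : 2*j/2 < _)]
    rw [← hjy]
    congr 1
    omega
  · have : y ∈ (Aᶜ).sort (· ≤ ·) := Finset.mem_sort (α := Fin n) (· ≤ ·) |>.mpr
      (Finset.mem_compl.mpr hy)
    obtain ⟨j, hj, hjy⟩ := List.mem_iff_getElem.mp this
    refine ⟨2 * j + 1, by omega, ?_⟩
    rw [gA, if_neg (by omega), List.getD_eq_getElem _ _ (by omega : (2*j+1)/2 < _)]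
    rw [← hjy]
    congr 1
    omega

/-- for any proper 2-coloring of the interleaved path graph, the color class of
`gA hn A 0` is exactly `A`. -/
lemma gA_class (hn : 0 < n) (hev : n % 2 = 0) {A : Finset (Fin n)} (hA : A.card = n / 2)
    (d : Fin n → Bool) (hd : ∀ x y, (consecGraph n (gA hn A)).Adj x y → d x ≠ d y) :
    ∀ x, (d x = d (gA hn A 0)) ↔ x ∈ A := by
  intro x
  obtain ⟨i, hi, hgi⟩ := gA_surj hn hev hA x
  rw [← hgi]
  rw [consec_alternate (gA_inj hn hev hA) d hd i hi]
  exact (gA_mem hn hev hA hi).symm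

end Construction


section Counting

lemma choose_half (k : ℕ) (hk : 1 ≤ k) : (2*k).choose k = 2 * ((2*k-1).choose (k-1)) := by
  have h := Nat.add_one_mul_choose_eq (2*k-1) (k-1)
  rw [show 2*k-1+1 = 2*k by omega, show k-1+1 = k by omega] at h
  have h2 : 2 * ((2*k-1).choose (k-1)) * k = (2*k).choose k * k := by
    rw [← h]; ring
  exact (Nat.eq_of_mul_eq_mul_right (by omega) h2).symm

lemma card_balanced_sets (n : ℕ) [NeZero n] (hn : 2 ≤ n) (hev : n % 2 = 0) :
    ((Finset.univ : Finset (Finset (Fin n))).filter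
      (fun A => A.card = n / 2 ∧ (0 : Fin n) ∈ A)).card = (n-1).choose (n/2 - 1) := by
  have npos : 0 < n := by omega
  have hcard : ((Finset.univ : Finset (Fin n)).erase 0).card = n - 1 := by
    rw [Finset.card_erase_of_mem (Finset.mem_univ _), Finset.card_univ, Fintype.card_fin]
  have hpc := Finset.card_powersetCard (n/2 - 1) ((Finset.univ : Finset (Fin n)).erase 0)
  rw [hcard] at hpc
  rw [← hpc]
  apply Finset.card_bij' (fun A _ => A.erase (0 : Fin n)) (fun B _ => insert (0 : Fin n) B)
  case left_inv =>
    intro A hA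
    replace hA : A.card = n / 2 ∧ (0 : Fin n) ∈ A := by simpa using hA
    exact Finset.insert_erase hA.2
  case right_inv =>
    intro B hB
    replace hB : B ⊆ Finset.univ.erase 0 ∧ B.card = n / 2 - 1 := by
      simpa [Finset.mem_powersetCard] using hB
    have h0 : (0 : Fin n) ∉ B := fun h => by simpa using hB.1 h
    exact Finset.erase_insert h0
  case hi =>
    intro A hA
    replace hA : A.card = n / 2 ∧ (0 : Fin n) ∈ A := by simpa using hA
    rw [Finset.mem_powersetCard]
    refine ⟨Finset.erase_subset_erase _ (Finset.subset_univ _), ?_⟩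
    rw [Finset.card_erase_of_mem hA.2, hA.1]
  case hj =>
    intro B hB
    replace hB : B ⊆ Finset.univ.erase 0 ∧ B.card = n / 2 - 1 := by
      simpa [Finset.mem_powersetCard] using hB
    have h0 : (0 : Fin n) ∉ B := fun h => by simpa using hB.1 h
    rw [Finset.mem_filter]
    refine ⟨Finset.mem_univ _, ?_, Finset.mem_insert_self _ _⟩
    rw [Finset.card_insert_of_notMem h0, hB.2]
    omega

section Certificate

/-- every Hamiltonian path graph on an even vertex set admits a balanced bipartition
containing the vertex `0`, with all edges crossing. -/
lemma ham_cert {n : ℕ} [NeZero n] (npos : 0 < n) (hev : n % 2 = 0) {G : SimpleGraph (Fin n)}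
    (hG : IsHamPathGraph G) :
    ∃ S : Finset (Fin n), S.card = n / 2 ∧ (0 : Fin n) ∈ S ∧
      ∀ x y, G.Adj x y → ((x ∈ S) ↔ (y ∉ S)) := by
  obtain ⟨u, v, p, hp, hE⟩ := hG
  letI : Inhabited (Fin n) := ⟨⟨0, npos⟩⟩
  set s : List (Fin n) := p.support with hs
  have hnd : s.Nodup := (Walk.isPath_def _).mp hp.isPath
  have hplen : p.length = n - 1 := by
    rw [hp.length_eq, Fintype.card_fin]
  have hslen : s.length = n := by
    rw [hs, Walk.length_support, hplen]
    omega
  set g : ℕ → Fin n := fun i => s.getD i default with hg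
  have hg1 : ∀ i j, i < n → j < n → g i = g j → i = j := by
    intro i j hi hj hij
    have hij' : s.getD i default = s.getD j default := hij
    rw [List.getD_eq_getElem _ _ (by omega : i < s.length),
      List.getD_eq_getElem _ _ (by omega : j < s.length)] at hij'
    exact hnd.getElem_inj_iff.mp hij'
  have hg2 : ∀ y, ∃ i, i < n ∧ g i = y := by
    intro y
    have : y ∈ s := hp.mem_support y
    obtain ⟨i, hi, hiy⟩ := List.mem_iff_getElem.mp this
    exact ⟨i, by omega, show s.getD i default = y from by
      rw [List.getD_eq_getElem _ _ hi]; exact hiy⟩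
  have hadj : ∀ x y : Fin n, G.Adj x y → ∃ i, i + 1 < n ∧
      ((x = g i ∧ y = g (i+1)) ∨ (y = g i ∧ x = g (i+1))) := by
    intro x y hxy
    have hmem : s(x, y) ∈ p.edges := by
      have := Set.ext_iff.mp hE s(x, y)
      exact this.mp (G.mem_edgeSet.mpr hxy)
    rw [walk_edges_eq] at hmem
    obtain ⟨i, hi, hie⟩ := List.mem_map.mp hmem
    rw [List.mem_range] at hi
    rcases Sym2.eq_iff.mp hie.symm with ⟨hx, hy⟩ | ⟨hx, hy⟩
    · exact ⟨i, by omega, Or.inl ⟨hx, hy⟩⟩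
    · exact ⟨i, by omega, Or.inr ⟨hy, hx⟩⟩
  -- the color class of even positions
  set Φ : Finset (Fin n) := ((Finset.range n).filter (fun i => i % 2 = 0)).image g with hΦ
  have memΦ : ∀ i, i < n → (g i ∈ Φ ↔ i % 2 = 0) := by
    intro i hi
    rw [hΦ]
    constructor
    · intro hmem
      obtain ⟨j, hj, hji⟩ := Finset.mem_image.mp hmem
      rw [Finset.mem_filter, Finset.mem_range] at hj
      rw [hg1 j i hj.1 hi hji] at hj
      exact hj.2
    · intro hpar
      exact Finset.mem_image.mpr ⟨i, Finset.mem_filter.mpr ⟨Finset.mem_range.mpr hi, hpar⟩, rfl⟩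
  have hinjΦ : Set.InjOn g ↑((Finset.range n).filter (fun i => i % 2 = 0)) := by
    intro a ha b hb hab
    rw [Finset.coe_filter, Set.mem_setOf_eq, Finset.mem_range] at ha hb
    exact hg1 a b ha.1 hb.1 hab
  have cardΦ : Φ.card = n / 2 := by
    rw [hΦ, Finset.card_image_of_injOn hinjΦ, evens_card]
    omega
  have cardΦc : (Φᶜ).card = n / 2 := by
    rw [Finset.card_compl, Fintype.card_fin, cardΦ]
    omega
  -- normalize so that 0 is inside
  by_cases h0 : (0 : Fin n) ∈ Φ
  · refine ⟨Φ, cardΦ, h0, ?_⟩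
    intro x y hxy
    obtain ⟨i, hi, hor⟩ := hadj x y hxy
    rcases hor with ⟨hx, hy⟩ | ⟨hy, hx⟩ <;>
      · subst hx; subst hy
        rw [memΦ i (by omega), memΦ (i+1) hi]
        omega
  · refine ⟨Φᶜ, cardΦc, Finset.mem_compl.mpr h0, ?_⟩
    intro x y hxy
    obtain ⟨i, hi, hor⟩ := hadj x y hxy
    rcases hor with ⟨hx, hy⟩ | ⟨hy, hx⟩ <;>
      · subst hx; subst hy
        rw [Finset.mem_compl, Finset.mem_compl, memΦ i (by omega), memΦ (i+1) hi]
        omega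

/-- from a non-2-colorable connected graph, extract an odd cycle -/
lemma oddCycle_of_not_colorable {n : ℕ} {U : SimpleGraph (Fin n)} (r : Fin n)
    (hreach : ∀ x, U.Reachable r x)
    (hno : ∀ d : Fin n → Bool, ∃ x y, U.Adj x y ∧ d x = d y) :
    HasCycleLen U Odd := by
  classical
  set P : Fin n → Prop := fun x => ∃ w : U.Walk r x, Even w.length with hP
  obtain ⟨x, y, hadj, heq⟩ := hno (fun x => decide (P x))
  have hPiff : P x ↔ P y := by
    rwa [decide_eq_decide] at heq
  by_cases hPx : P x
  · obtain ⟨p, hp⟩ := hPx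
    obtain ⟨q, hq⟩ := hPiff.mp ⟨p, hp⟩
    have hcw : Odd ((p.append (Walk.cons hadj q.reverse)).length) := by
      rw [Walk.length_append, Walk.length_cons, Walk.length_reverse]
      rcases hp with ⟨a, ha⟩; rcases hq with ⟨b, hb⟩
      rw [Nat.odd_iff]; omega
    exact oddCycle_of_oddClosedWalk _ _ rfl hcw
  · have hPy : ¬ P y := fun h => hPx (hPiff.mpr h)
    obtain ⟨p⟩ := hreach x
    obtain ⟨q⟩ := hreach y
    have hp : Odd p.length := by
      rw [Nat.odd_iff, ← Nat.not_even_iff]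
      exact fun h => hPx ⟨p, h⟩
    have hq : Odd q.length := by
      rw [Nat.odd_iff, ← Nat.not_even_iff]
      exact fun h => hPy ⟨q, h⟩
    have hcw : Odd ((p.append (Walk.cons hadj q.reverse)).length) := by
      rw [Walk.length_append, Walk.length_cons, Walk.length_reverse]
      rcases hp with ⟨a, ha⟩; rcases hq with ⟨b, hb⟩
      rw [Nat.odd_iff]; omega
    exact oddCycle_of_oddClosedWalk _ _ rfl hcw

end Certificate


section Main

lemma family_ncard_le {n : ℕ} [NeZero n] (h2 : 2 ≤ n) (hev : n % 2 = 0)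
    (F : Set (SimpleGraph (Fin n)))
    (hham : ∀ G ∈ F, IsHamPathGraph G)
    (hodd : ∀ G ∈ F, ∀ H ∈ F, G ≠ H → HasCycleLen (G ⊔ H) Odd) :
    F.ncard ≤ n.choose (n / 2) / 2 := by
  classical
  have npos : 0 < n := by omega
  set T : Set (Finset (Fin n)) := ↑((Finset.univ : Finset (Finset (Fin n))).filter
      (fun A => A.card = n / 2 ∧ (0 : Fin n) ∈ A)) with hT
  have key : ∀ G ∈ F, ∃ S : Finset (Fin n), S.card = n/2 ∧ (0:Fin n) ∈ S ∧
      ∀ x y, G.Adj x y → ((x ∈ S) ↔ (y ∉ S)) := fun G hG => ham_cert npos hev (hham G hG)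
  set f : SimpleGraph (Fin n) → Finset (Fin n) := fun G =>
    if h : ∃ S : Finset (Fin n), S.card = n/2 ∧ (0:Fin n) ∈ S ∧
        ∀ x y, G.Adj x y → ((x ∈ S) ↔ (y ∉ S)) then h.choose else ∅ with hf
  have hfprop : ∀ G ∈ F, (f G).card = n/2 ∧ (0:Fin n) ∈ f G ∧
      ∀ x y, G.Adj x y → ((x ∈ f G) ↔ (y ∉ f G)) := by
    intro G hG
    have : f G = (key G hG).choose := dif_pos (key G hG)
    rw [this]
    exact (key G hG).choose_spec
  have hmaps : ∀ G ∈ F, f G ∈ T := by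
    intro G hG
    rw [hT, Finset.mem_coe, Finset.mem_filter]
    exact ⟨Finset.mem_univ _, (hfprop G hG).1, (hfprop G hG).2.1⟩
  have hinj : Set.InjOn f F := by
    intro G hG H hH hfeq
    by_contra hne
    obtain ⟨vtx, c, _, hodd'⟩ := hodd G hG H hH hne
    set d : Fin n → Bool := fun x => decide (x ∈ f G) with hd
    have hdG : ∀ x y, G.Adj x y → d x ≠ d y := by
      intro x y hxy heqd
      rw [hd, decide_eq_decide] at heqd
      have := (hfprop G hG).2.2 x y hxy
      tauto
    have hdH : ∀ x y, H.Adj x y → d x ≠ d y := by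
      intro x y hxy heqd
      rw [hd, decide_eq_decide, hfeq] at heqd
      have := (hfprop H hH).2.2 x y hxy
      tauto
    let col : (G ⊔ H).Coloring Bool := Coloring.mk d (fun hadj => by
      rcases hadj with hadj | hadj
      · exact hdG _ _ hadj
      · exact hdH _ _ hadj)
    have hcon := (Coloring.odd_length_iff_not_congr col c).mp hodd'
    exact iff_not_self hcon.symm
  calc F.ncard ≤ T.ncard := Set.ncard_le_ncard_of_injOn f hmaps hinj (Set.toFinite T)
    _ = (n-1).choose (n/2-1) := by
        rw [hT, Set.ncard_coe_finset, card_balanced_sets n h2 hev]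
    _ = n.choose (n/2) / 2 := by
        have h := choose_half (n/2) (by omega)
        rw [show 2*(n/2) = n from by omega] at h
        omega

lemma exists_family {n : ℕ} [NeZero n] (h2 : 2 ≤ n) (hev : n % 2 = 0) :
    ∃ F : Set (SimpleGraph (Fin n)),
      (∀ G ∈ F, IsHamPathGraph G) ∧
      (∀ G ∈ F, ∀ H ∈ F, G ≠ H → HasCycleLen (G ⊔ H) Odd) ∧
      F.ncard = n.choose (n / 2) / 2 := by
  classical
  have npos : 0 < n := by omega
  set 𝒜 : Set (Finset (Fin n)) := ↑((Finset.univ : Finset (Finset (Fin n))).filter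
      (fun A => A.card = n / 2 ∧ (0 : Fin n) ∈ A)) with h𝒜
  have hmem𝒜 : ∀ A ∈ 𝒜, A.card = n / 2 ∧ (0 : Fin n) ∈ A := by
    intro A hA
    rw [h𝒜, Finset.mem_coe, Finset.mem_filter] at hA
    exact hA.2
  refine ⟨(fun A => consecGraph n (gA npos A)) '' 𝒜, ?_, ?_, ?_⟩
  · rintro G ⟨A, hA, rfl⟩
    exact consec_isHamPathGraph npos (gA_inj npos hev (hmem𝒜 A hA).1)
      (gA_surj npos hev (hmem𝒜 A hA).1)
  · rintro G ⟨A, hA, rfl⟩ H ⟨B, hB, rfl⟩ hne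
    have hAB : A ≠ B := fun h => hne (by rw [h])
    apply oddCycle_of_not_colorable (gA npos A 0)
    · intro x
      exact ((consec_reachable npos (gA_inj npos hev (hmem𝒜 A hA).1)
        (gA_surj npos hev (hmem𝒜 A hA).1) x).mono le_sup_left)
    · intro d
      by_contra hcon
      push_neg at hcon
      have hdA : ∀ x y, (consecGraph n (gA npos A)).Adj x y → d x ≠ d y :=
        fun x y h => hcon x y (Or.inl h)
      have hdB : ∀ x y, (consecGraph n (gA npos B)).Adj x y → d x ≠ d y :=
        fun x y h => hcon x y (Or.inr h)
      have hclA := gA_class npos hev (hmem𝒜 A hA).1 d hdA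
      have hclB := gA_class npos hev (hmem𝒜 B hB).1 d hdB
      have h0A : d 0 = d (gA npos A 0) := (hclA 0).mpr (hmem𝒜 A hA).2
      have h0B : d 0 = d (gA npos B 0) := (hclB 0).mpr (hmem𝒜 B hB).2
      apply hAB
      ext x
      rw [← hclA x, ← hclB x, ← h0A, ← h0B]
  · have hinj : Set.InjOn (fun A => consecGraph n (gA npos A)) 𝒜 := by
      intro A hA B hB heq
      simp only at heq
      set c : Fin n → Bool := fun x => decide (x ∈ A) with hc
      have hcA : ∀ x y, (consecGraph n (gA npos A)).Adj x y → c x ≠ c y := by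
        rintro x y ⟨hne', i, hi, hor⟩ hxy
        rw [hc, decide_eq_decide] at hxy
        have h1 := gA_mem npos hev (hmem𝒜 A hA).1 (show i < n by omega)
        have h2 := gA_mem npos hev (hmem𝒜 A hA).1 hi
        rcases hor with ⟨hx, hy⟩ | ⟨hy, hx⟩ <;> subst hx <;> subst hy <;>
          rw [h1, h2] at hxy <;> omega
      have hcB : ∀ x y, (consecGraph n (gA npos B)).Adj x y → c x ≠ c y := by
        rw [← heq]
        exact hcA
      have hclB := gA_class npos hev (hmem𝒜 B hB).1 c hcB
      have h0 : c (gA npos B 0) = true := by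
        have hh := (hclB 0).mpr (hmem𝒜 B hB).2
        have h0A : c 0 = true := by
          rw [hc, decide_eq_true_iff]
          exact (hmem𝒜 A hA).2
        rw [← hh, h0A]
      ext x
      have hx := hclB x
      rw [h0, hc, decide_eq_true_iff] at hx
      exact hx
    rw [Set.ncard_image_of_injOn hinj, h𝒜, Set.ncard_coe_finset,
      card_balanced_sets n h2 hev]
    have h := choose_half (n/2) (by omega)
    rw [show 2*(n/2) = n from by omega] at h
    omega

end Main

theorem stmt5 {n : ℕ} (hn : Even n) :
    IsGreatest {m : ℕ | ∃ F : Set (SimpleGraph (Fin n)),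
      (∀ G ∈ F, IsHamPathGraph G) ∧
      (∀ G ∈ F, ∀ H ∈ F, G ≠ H → HasCycleLen (G ⊔ H) Odd) ∧
      F.ncard = m} (n.choose (n / 2) / 2) := by
  rcases Nat.eq_zero_or_pos n with h0 | hpos
  · subst h0
    constructor
    · refine ⟨∅, by simp, by simp, by simp⟩
    · rintro m ⟨F, h1, _, h3⟩
      have hFe : F = ∅ := Set.eq_empty_iff_forall_notMem.mpr (fun G hG => by
        obtain ⟨u, -⟩ := h1 G hG
        exact u.elim0)
      rw [hFe, Set.ncard_empty] at h3
      omega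
  · have h2n : 2 ≤ n := by
      rcases hn with ⟨k, hk⟩
      omega
    have hev' : n % 2 = 0 := Nat.even_iff.mp hn
    haveI : NeZero n := ⟨by omega⟩
    constructor
    · exact exists_family h2n hev'
    · rintro m ⟨F, hham, hodd, rfl⟩
      exact family_ncard_le h2n hev' F hham hodd
end Counting
end

section
/- The maximum cardinality of a family of Hamiltonian paths in K_5 such that the union of any two distinct members contains a triangle equals 10. -/
open SimpleGraph

/-! ### Auxiliary definitions -/

def pg (E : Finset (Sym2 (Fin 5))) : SimpleGraph (Fin 5) where
  Adj u v := u ≠ v ∧ s(u, v) ∈ E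
  symm := ⟨fun u v h => ⟨h.1.symm, by rw [Sym2.eq_swap]; exact h.2⟩⟩
  loopless := ⟨fun u h => h.1 rfl⟩

lemma pg_edgeSet (E : Finset (Sym2 (Fin 5))) (h : ∀ e ∈ E, ¬ e.IsDiag) :
    (pg E).edgeSet = ↑E := by
  ext e
  induction e using Sym2.ind with
  | _ u v =>
    simp only [mem_edgeSet, pg, Finset.mem_coe]
    constructor
    · exact fun hx => hx.2
    · intro hx
      exact ⟨fun huv => (h _ hx) (by simp [huv]), hx⟩

def pList (a b c d e : Fin 5) : Finset (Sym2 (Fin 5)) :=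
  {s(a,b), s(b,c), s(c,d), s(d,e)}

lemma ham5 (a b c d e : Fin 5) (h : ([a,b,c,d,e] : List (Fin 5)).Nodup) :
    IsHamPathGraph (pg (pList a b c d e)) := by
  simp only [List.nodup_cons, List.mem_cons, List.mem_singleton, List.not_mem_nil,
    or_false, not_or, List.nodup_nil, and_true] at h
  obtain ⟨⟨hab, hac, had, hae⟩, ⟨hbc, hbd, hbe⟩, ⟨hcd, hce⟩, hde, -⟩ := h
  have h1 : (pg (pList a b c d e)).Adj a b := ⟨hab, by simp [pList]⟩
  have h2 : (pg (pList a b c d e)).Adj b c := ⟨hbc, by simp [pList]⟩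
  have h3 : (pg (pList a b c d e)).Adj c d := ⟨hcd, by simp [pList]⟩
  have h4 : (pg (pList a b c d e)).Adj d e := ⟨hde, by simp [pList]⟩
  refine ⟨a, e, .cons h1 (.cons h2 (.cons h3 (.cons h4 .nil))), ?_, ?_⟩
  · intro v
    have hv : v ∈ [a,b,c,d,e] := by
      have hcard : ([a,b,c,d,e] : List (Fin 5)).toFinset = Finset.univ := by
        apply Finset.eq_univ_of_card
        rw [List.toFinset_card_of_nodup]
        · rfl
        · simp [hab, hac, had, hae, hbc, hbd, hbe, hcd, hce, hde]
      have : v ∈ ([a,b,c,d,e] : List (Fin 5)).toFinset := by rw [hcard]; exact Finset.mem_univ v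
      simpa using this
    have hnd : ([a,b,c,d,e] : List (Fin 5)).Nodup := by
      simp [hab, hac, had, hae, hbc, hbd, hbe, hcd, hce, hde]
    simpa [Walk.support] using List.count_eq_one_of_mem hnd hv
  · rw [pg_edgeSet]
    · ext f
      simp only [Walk.edges_cons, Walk.edges_nil]
      simp [pList]
      try tauto
    · intro f hf
      simp [pList] at hf
      rcases hf with rfl | rfl | rfl | rfl <;> simp [Sym2.isDiag_iff_proj_eq, *]

def hasTri (E1 E2 : Finset (Sym2 (Fin 5))) : Prop :=
  ∃ x y z : Fin 5, x ≠ y ∧ y ≠ z ∧ z ≠ x ∧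
    s(x,y) ∈ E1 ∪ E2 ∧ s(y,z) ∈ E1 ∪ E2 ∧ s(z,x) ∈ E1 ∪ E2

instance (E1 E2 : Finset (Sym2 (Fin 5))) : Decidable (hasTri E1 E2) := by
  unfold hasTri; infer_instance

lemma triangle_of_adj {V : Type*} {G : SimpleGraph V} {x y z : V}
    (hxy : G.Adj x y) (hyz : G.Adj y z) (hzx : G.Adj z x) :
    HasCycleLen G (fun l => l = 3) := by
  have n1 := hxy.ne
  have n2 := hyz.ne
  have n3 := hzx.ne
  refine ⟨x, .cons hxy (.cons hyz (.cons hzx .nil)), ?_, rfl⟩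
  rw [Walk.isCycle_def, Walk.isTrail_def]
  refine ⟨?_, by simp, ?_⟩
  · simp only [Walk.edges_cons, Walk.edges_nil, List.nodup_cons, List.mem_cons,
      List.not_mem_nil, or_false, List.nodup_nil, and_true, Sym2.eq_iff]
    push_neg
    tauto
  · simp only [Walk.support_cons, Walk.support_nil, List.tail_cons, List.nodup_cons,
      List.mem_cons, List.not_mem_nil, or_false, List.nodup_nil, and_true,
      List.mem_singleton, not_or]
    tauto

lemma hasTri_spec {E1 E2 : Finset (Sym2 (Fin 5))} (h : hasTri E1 E2) :
    HasCycleLen (pg E1 ⊔ pg E2) (fun l => l = 3) := by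
  obtain ⟨x, y, z, hxy, hyz, hzx, m1, m2, m3⟩ := h
  have adj : ∀ u v : Fin 5, u ≠ v → s(u,v) ∈ E1 ∪ E2 → (pg E1 ⊔ pg E2).Adj u v := by
    intro u v huv hm
    rcases Finset.mem_union.1 hm with hm | hm
    · exact Or.inl ⟨huv, hm⟩
    · exact Or.inr ⟨huv, hm⟩
  exact triangle_of_adj (adj _ _ hxy m1) (adj _ _ hyz m2) (adj _ _ hzx m3)

/-! ### Upper bound: bipartition -/

lemma ham_bipartite {G : SimpleGraph (Fin 5)} (hG : IsHamPathGraph G) :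
    ∃ A : Finset (Fin 5), A.card = 2 ∧ G ≤ biparGraph A := by
  obtain ⟨u, v, p, hham, hedge⟩ := hG
  have hlen : p.length = 4 := by
    have := hham.length_eq
    simpa using this
  have hnd : p.support.Nodup := hham.isPath.support_nodup
  cases p with
  | nil => simp at hlen
  | cons h1 q =>
  cases q with
  | nil => simp at hlen
  | cons h2 q =>
  cases q with
  | nil => simp at hlen
  | cons h3 q =>
  cases q with
  | nil => simp at hlen
  | cons h4 q =>
  cases q with
  | cons h5 q => simp at hlen
  | nil =>
  rename_i b c d
  simp only [Walk.support_cons, Walk.support_nil, List.nodup_cons, List.mem_cons,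
    List.mem_singleton, List.not_mem_nil, or_false, not_or, List.nodup_nil, and_true] at hnd
  obtain ⟨⟨hub, huc, hud, huv⟩, ⟨hbc, hbd, hbv⟩, ⟨hcd, hcv⟩, hdv⟩ := hnd
  refine ⟨{b, d}, by rw [Finset.card_insert_of_notMem (by simp [hbd]), Finset.card_singleton], ?_⟩
  intro x y hxy
  have hmem : s(x, y) ∈ ({s(u,b), s(b,c), s(c,d), s(d,v)} : Set (Sym2 (Fin 5))) := by
    have : s(x,y) ∈ G.edgeSet := hxy
    rw [hedge] at this
    simpa [Walk.edges, Set.mem_insert_iff] using this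
  simp only [Set.mem_insert_iff, Set.mem_singleton_iff, Sym2.eq_iff] at hmem
  show (x ∈ ({b, d} : Finset (Fin 5)) ∧ y ∉ ({b, d} : Finset (Fin 5))) ∨
    (y ∈ ({b, d} : Finset (Fin 5)) ∧ x ∉ ({b, d} : Finset (Fin 5)))
  simp only [Finset.mem_insert, Finset.mem_singleton]
  rcases hmem with (⟨rfl, rfl⟩ | ⟨rfl, rfl⟩) | (⟨rfl, rfl⟩ | ⟨rfl, rfl⟩) |
    (⟨rfl, rfl⟩ | ⟨rfl, rfl⟩) | (⟨rfl, rfl⟩ | ⟨rfl, rfl⟩) <;>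
    simp_all <;> tauto

lemma bipar_parity {n : ℕ} (A : Finset (Fin n)) {x y : Fin n}
    (w : (biparGraph A).Walk x y) : ((x ∈ A) ↔ (y ∈ A)) ↔ Even w.length := by
  induction w with
  | nil => simp
  | cons h w ih =>
    simp only [Walk.length_cons, Nat.even_add_one, ← ih]
    rcases h with ⟨h1, h2⟩ | ⟨h1, h2⟩ <;> tauto

lemma bipar_no_triangle {A : Finset (Fin 5)} {G : SimpleGraph (Fin 5)}
    (hle : G ≤ biparGraph A) (h : HasCycleLen G (fun l => l = 3)) : False := by
  obtain ⟨v, c, _, hl⟩ := h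
  have := bipar_parity A (c.mapLe hle)
  simp only [iff_self, true_iff] at this
  rw [show (c.mapLe hle).length = c.length from Walk.length_map _ _, hl] at this
  exact (by decide : ¬ Even 3) this

/-! ### The witness family -/

def Es : Finset (Finset (Sym2 (Fin 5))) :=
  { pList 0 1 2 3 4, pList 0 1 2 4 3, pList 0 1 3 2 4, pList 0 2 1 3 4,
    pList 0 2 1 4 3, pList 0 3 1 4 2, pList 1 0 2 3 4, pList 1 0 2 4 3,
    pList 1 0 3 2 4, pList 2 0 4 1 3 }

set_option maxRecDepth 2000 in
lemma Es_nodiag : ∀ E ∈ Es, ∀ e ∈ E, ¬ e.IsDiag := by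
  intro E hE
  simp only [Es, Finset.mem_insert, Finset.mem_singleton] at hE
  rcases hE with rfl|rfl|rfl|rfl|rfl|rfl|rfl|rfl|rfl|rfl <;> decide

lemma pg_injOn : ∀ E1 ∈ Es, ∀ E2 ∈ Es, pg E1 = pg E2 → E1 = E2 := by
  have hnd := Es_nodiag
  intro E1 h1 E2 h2 h
  have : ((E1 : Set (Sym2 (Fin 5)))) = E2 := by
    rw [← pg_edgeSet E1 (hnd E1 h1), ← pg_edgeSet E2 (hnd E2 h2), h]
  exact_mod_cast this

set_option maxRecDepth 2000 in
lemma Es_card : Es.card = 10 := by decide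

set_option maxRecDepth 2000 in
lemma two_subsets_card :
    (Finset.univ.filter (fun A : Finset (Fin 5) => A.card = 2)).card = 10 := by decide

set_option maxRecDepth 2000 in
lemma Es_tri : ∀ E1 ∈ Es, ∀ E2 ∈ Es, E1 ≠ E2 → hasTri E1 E2 := by
  intro E1 h1 E2 h2 hne
  simp only [Es, Finset.mem_insert, Finset.mem_singleton] at h1 h2
  rcases h1 with rfl|rfl|rfl|rfl|rfl|rfl|rfl|rfl|rfl|rfl <;>
    rcases h2 with rfl|rfl|rfl|rfl|rfl|rfl|rfl|rfl|rfl|rfl <;>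
    first
      | exact absurd rfl hne
      | decide

theorem stmt6 :
    IsGreatest {m : ℕ | ∃ F : Set (SimpleGraph (Fin 5)),
      (∀ G ∈ F, IsHamPathGraph G) ∧
      (∀ G ∈ F, ∀ H ∈ F, G ≠ H → HasCycleLen (G ⊔ H) (fun l => l = 3)) ∧
      F.ncard = m} 10 := by
  constructor
  · -- membership
    refine ⟨pg '' ↑Es, ?_, ?_, ?_⟩
    · rintro G ⟨E, hE, rfl⟩
      have hE' : E ∈ Es := hE
      simp only [Es, Finset.mem_insert, Finset.mem_singleton] at hE'
      rcases hE' with rfl|rfl|rfl|rfl|rfl|rfl|rfl|rfl|rfl|rfl <;>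
        exact ham5 _ _ _ _ _ (by decide)
    · rintro G ⟨E1, h1, rfl⟩ H ⟨E2, h2, rfl⟩ hne
      have hE : E1 ≠ E2 := fun h => hne (by rw [h])
      exact hasTri_spec (Es_tri E1 h1 E2 h2 hE)
    · have hinj : Set.InjOn pg ↑Es := fun E1 h1 E2 h2 h => pg_injOn E1 h1 E2 h2 h
      rw [Set.ncard_image_of_injOn hinj, Set.ncard_coe_finset]
      exact Es_card
  · -- upper bound
    rintro m ⟨F, hham, htri, rfl⟩
    classical
    set f : SimpleGraph (Fin 5) → Finset (Fin 5) := fun G =>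
      if h : ∃ A : Finset (Fin 5), A.card = 2 ∧ G ≤ biparGraph A then h.choose else ∅ with hf
    have hfs : ∀ G ∈ F, (f G).card = 2 ∧ G ≤ biparGraph (f G) := by
      intro G hG
      have h := ham_bipartite (hham G hG)
      rw [hf]
      simp only [dif_pos h]
      exact h.choose_spec
    have : F.ncard ≤ Set.ncard {A : Finset (Fin 5) | A.card = 2} := by
      apply Set.ncard_le_ncard_of_injOn f ?_ ?_ (Set.toFinite _)
      · intro G hG; exact (hfs G hG).1
      · intro G hG H hH hfGH
        by_contra hne
        have htriGH := htri G hG H hH hne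
        exact bipar_no_triangle
          (sup_le (hfs G hG).2 (hfGH ▸ (hfs H hH).2)) htriGH
    have h10 : Set.ncard {A : Finset (Fin 5) | A.card = 2} = 10 := by
      have : {A : Finset (Fin 5) | A.card = 2} =
          ↑(Finset.univ.filter (fun A : Finset (Fin 5) => A.card = 2)) := by
        ext A; simp
      rw [this, Set.ncard_coe_finset]
      exact two_subsets_card
    omega
end

section
/- Fix a perfect matching M of K_n (n even) with each edge having one endpoint in A and one in B, for a bipartition (A,B). For each permutation of the edges of M, form a Hamiltonian path by traversing each matching edge from its A-endpoint to its B-endpoint and joining the B-endpoint of each edge to the A-endpoint of the next. Then the union of any two distinct Hamiltonian paths so obtained contains an even cycle; in fact it contains a cycle with an equal number of matching edges and linking edges. -/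
open SimpleGraph

namespace Stmt14Aux

lemma dup_decomp {α : Type*} : ∀ {l : List α}, ¬ l.Nodup → ∃ c s t, l = s ++ c :: t ∧ c ∈ t := by
  intro l
  induction l with
  | nil => simp
  | cons hd tl ih =>
    intro h
    by_cases hm : hd ∈ tl
    · exact ⟨hd, [], tl, rfl, hm⟩
    · have htl : ¬ tl.Nodup := fun hn => h (List.nodup_cons.mpr ⟨hm, hn⟩)
      obtain ⟨c, s, t, rfl, hct⟩ := ih htl
      exact ⟨c, hd :: s, t, rfl, hct⟩

lemma extract_cycle {α : Type*} {R : α → α → Prop} :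
    ∀ (N : ℕ) (l : List α) (x : α), l.length ≤ N → List.Chain R x (l ++ [x]) →
      ∃ (y : α) (l' : List α), List.Chain R y (l' ++ [y]) ∧ (y :: l').Nodup := by
  intro N
  induction N with
  | zero =>
    intro l x hl hc
    cases l with
    | nil => exact ⟨x, [], hc, by simp⟩
    | cons c t => simp at hl
  | succ N ih =>
    intro l x hl hc
    by_cases hn : (x :: l).Nodup
    · exact ⟨x, l, hc, hn⟩
    · by_cases hx : x ∈ l
      · obtain ⟨s, t, rfl⟩ := List.append_of_mem hx
        have hc' : List.Chain R x (s ++ x :: (t ++ [x])) := by simpa using hc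
        exact ih s x (by simp at hl; omega) (List.isChain_cons_split.mp hc').1
      · have hd : ¬ l.Nodup := fun h => hn (List.nodup_cons.mpr ⟨hx, h⟩)
        obtain ⟨c, s, t, rfl, hct⟩ := dup_decomp hd
        obtain ⟨t1, t2, rfl⟩ := List.append_of_mem hct
        have hc' : List.Chain R x (s ++ c :: (t1 ++ c :: (t2 ++ [x]))) := by simpa using hc
        have h2 := (List.isChain_cons_split.mp hc').2
        have h3 := (List.isChain_cons_split.mp h2).1
        exact ih t1 c (by simp at hl; omega) h3

lemma transGen_chain {α : Type*} {R : α → α → Prop} {x y : α} (h : Relation.TransGen R x y) :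
    ∃ l, List.Chain R x (l ++ [y]) := by
  induction h with
  | single h => exact ⟨[], List.IsChain.cons_cons h (List.IsChain.singleton _)⟩
  | @tail b c _ hR ih =>
    obtain ⟨l, hl⟩ := ih
    refine ⟨l ++ [b], ?_⟩
    rw [List.append_assoc]
    exact List.isChain_cons_split.mpr ⟨hl, List.IsChain.cons_cons hR (List.IsChain.singleton _)⟩

section Walk

variable {α β : Type*} {G : SimpleGraph β} {a b : α → β} {R : α → α → Prop}

/-- Lift a chain in `R` to an alternating walk. -/
def walkOf (hm : ∀ x : α, G.Adj (a x) (b x)) (hl : ∀ x y, R x y → G.Adj (b x) (a y)) :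
    (l : List α) → (x z : α) → List.Chain R x (l ++ [z]) → G.Walk (a x) (a z)
  | [], x, z, h =>
      SimpleGraph.Walk.cons (hm x)
        (SimpleGraph.Walk.cons (hl x z (List.isChain_pair.mp h)) SimpleGraph.Walk.nil)
  | c :: l', x, z, h =>
      SimpleGraph.Walk.cons (hm x)
        (SimpleGraph.Walk.cons (hl x c (List.chain_cons.mp h).1)
          (walkOf hm hl l' c z (List.chain_cons.mp h).2))

variable (hm : ∀ x : α, G.Adj (a x) (b x)) (hl : ∀ x y, R x y → G.Adj (b x) (a y))

lemma walkOf_support : ∀ (l : List α) (x z : α) (h : List.Chain R x (l ++ [z])),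
    (walkOf hm hl l x z h).support
      = List.map (Sum.elim a b)
          (Sum.inl x :: Sum.inr x :: ((l.flatMap fun i => [Sum.inl i, Sum.inr i]) ++ [Sum.inl z])) := by
  intro l
  induction l with
  | nil => intro x z h; simp [walkOf]
  | cons c l' ih =>
    intro x z h
    simp only [walkOf, SimpleGraph.Walk.support_cons]
    rw [ih c z (List.chain_cons.mp h).2]
    simp

lemma walkOf_length : ∀ (l : List α) (x z : α) (h : List.Chain R x (l ++ [z])),
    (walkOf hm hl l x z h).length = 2 * l.length + 2 := by
  intro l
  induction l with
  | nil => intro x z h; simp [walkOf]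
  | cons c l' ih =>
    intro x z h
    simp only [walkOf, SimpleGraph.Walk.length_cons]
    rw [ih c z (List.chain_cons.mp h).2]
    simp; omega

lemma walkOf_edges : ∀ (l : List α) (x z : α) (h : List.Chain R x (l ++ [z])),
    (walkOf hm hl l x z h).edges
      = (List.zip (x :: l) (l ++ [z])).flatMap
          (fun p => [s(a p.1, b p.1), s(b p.1, a p.2)]) := by
  intro l
  induction l with
  | nil => intro x z h; simp [walkOf]
  | cons c l' ih =>
    intro x z h
    simp only [walkOf, SimpleGraph.Walk.edges_cons]
    rw [ih c z (List.chain_cons.mp h).2]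
    simp [List.zip]


end Walk

lemma sum_list_nodup {g : Type*} {y : g} {l : List g} (hy : y ∉ l) (hl : l.Nodup) :
    (Sum.inr y :: ((l.flatMap fun i => [Sum.inl i, Sum.inr i]) ++ [Sum.inl y]) : List (g ⊕ g)).Nodup := by
  rw [List.nodup_cons]
  constructor
  · intro hmem
    simp only [List.mem_append, List.mem_flatMap, List.mem_cons, List.mem_singleton,
      List.not_mem_nil, or_false] at hmem
    rcases hmem with ⟨i, hi, hcase⟩ | hcase <;> simp_all
  · rw [List.nodup_append']
    refine ⟨?_, by simp, ?_⟩
    · rw [List.nodup_flatMap]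
      refine ⟨fun i _ => by simp, hl.imp ?_⟩
      intro i j hij e he1 he2
      simp only [List.mem_cons, List.mem_singleton, List.not_mem_nil, or_false] at he1 he2
      rcases he1 with rfl | rfl <;> rcases he2 with h | h <;> simp_all
    · intro e he1 he2
      simp only [List.mem_singleton] at he2
      subst he2
      simp only [List.mem_flatMap, List.mem_cons, List.mem_singleton, List.not_mem_nil,
        or_false] at he1
      obtain ⟨i, hi, h | h⟩ := he1 <;> simp_all

lemma chain_zip {α : Type*} {R : α → α → Prop} :
    ∀ (l : List α) (x z : α), List.Chain R x (l ++ [z]) →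
      ∀ p ∈ List.zip (x :: l) (l ++ [z]), R p.1 p.2 := by
  intro l
  induction l with
  | nil =>
    intro x z h p hp
    simp only [List.nil_append, List.zip_cons_cons, List.zip_nil_right, List.mem_singleton] at hp
    subst hp
    exact List.isChain_pair.mp h
  | cons c l' ih =>
    intro x z h p hp
    rw [List.cons_append] at h; replace h := List.isChain_cons_cons.mp h
    simp only [List.cons_append, List.zip_cons_cons, List.mem_cons] at hp
    rcases hp with rfl | hp
    · exact h.1
    · exact ih c z h.2 p hp


/-- The relation on matching-edge indices: `x` is linked to `y` by a linking edge of `σ` or `τ`. -/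
def linkRel {m : ℕ} (σ τ : Equiv.Perm (Fin m)) (x y : Fin m) : Prop :=
  ∃ ρ : Equiv.Perm (Fin m), (ρ = σ ∨ ρ = τ) ∧
    ∃ t : ℕ, ∃ ht : t + 1 < m, ρ ⟨t, Nat.lt_of_succ_lt ht⟩ = x ∧ ρ ⟨t + 1, ht⟩ = y

lemma linkRel_ne {m : ℕ} {σ τ : Equiv.Perm (Fin m)} {x y : Fin m}
    (h : linkRel σ τ x y) : x ≠ y := by
  rintro rfl
  obtain ⟨ρ, -, t, ht, h1, h2⟩ := h
  have := ρ.injective (h1.trans h2.symm)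
  simp [Fin.ext_iff] at this

/-- If the link relation has no simple cycle, then `σ = τ`. -/
lemma eq_of_no_cycle {m : ℕ} {σ τ : Equiv.Perm (Fin m)}
    (hno : ¬ ∃ (y : Fin m) (l : List (Fin m)),
      List.Chain (linkRel σ τ) y (l ++ [y]) ∧ (y :: l).Nodup) : σ = τ := by
  push_neg at hno
  set R := linkRel σ τ with hRdef
  have hirr : ∀ x, ¬ Relation.TransGen R x x := by
    intro x hx
    obtain ⟨l, hl⟩ := transGen_chain hx
    obtain ⟨y, l', h1, h2⟩ := extract_cycle l.length l x le_rfl hl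
    exact hno y l' h1 h2
  have key : ∀ ρ : Equiv.Perm (Fin m), (ρ = σ ∨ ρ = τ) → ∀ (t : ℕ) (ht : t < m),
      ∀ (s : ℕ) (hs : s < t), Relation.TransGen R (ρ ⟨s, by omega⟩) (ρ ⟨t, ht⟩) := by
    intro ρ hρ t
    induction t with
    | zero => intro ht s hs; omega
    | succ t ih =>
      intro ht s hs
      have hstep : R (ρ ⟨t, by omega⟩) (ρ ⟨t + 1, ht⟩) := ⟨ρ, hρ, t, ht, rfl, rfl⟩
      rcases Nat.lt_or_ge s t with h | h
      · exact (ih (by omega) s h).tail hstep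
      · have hst : s = t := by omega
        subst hst
        exact Relation.TransGen.single hstep
  have hmono : StrictMono (fun i => σ.symm (τ i)) := by
    intro i j hij
    have h1 : Relation.TransGen R (τ i) (τ j) := key τ (Or.inr rfl) j.val j.isLt i.val hij
    rcases lt_trichotomy (σ.symm (τ i)) (σ.symm (τ j)) with h | h | h
    · exact h
    · exfalso
      have hττ : τ i = τ j := by
        have := congrArg σ h
        simpa using this
      exact absurd (τ.injective hττ) hij.ne
    · exfalso
      have h2 : Relation.TransGen R (σ (σ.symm (τ j))) (σ (σ.symm (τ i))) :=
        key σ (Or.inl rfl) (σ.symm (τ i)).val (σ.symm (τ i)).isLt (σ.symm (τ j)).val h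
      rw [Equiv.apply_symm_apply, Equiv.apply_symm_apply] at h2
      exact hirr _ (h1.trans h2)
  have hid : (fun i => σ.symm (τ i)) = id := by
    haveI : WellFoundedLT (Fin m) := inferInstance
    refine (StrictMono.range_inj (β := Fin m) (γ := Fin m) hmono strictMono_id).mp ?_
    rw [Set.range_id]
    exact Set.range_eq_univ.mpr fun i => ⟨τ.symm (σ i), by simp⟩
  refine Equiv.ext fun i => ?_
  have hi := congrFun hid i
  simp only [id_eq] at hi
  have := congrArg σ hi
  simpa using this.symm

end Stmt14Aux

/-- The Hamiltonian path of `K_n` obtained from the permutation `σ` of the matching edges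
`{a i, b i}`: traverse the matching edges in the order given by `σ`, each from its
`A`-endpoint to its `B`-endpoint, joining the `B`-endpoint of each matching edge to the
`A`-endpoint of the next by a linking edge. -/
def matchPathGraph {n m : ℕ} (a b : Fin m → Fin n) (σ : Equiv.Perm (Fin m)) :
    SimpleGraph (Fin n) :=
  SimpleGraph.fromEdgeSet
    ({e | ∃ i : Fin m, e = s(a i, b i)} ∪
     {e | ∃ i j : Fin m, (j : ℕ) = (i : ℕ) + 1 ∧ e = s(b (σ i), a (σ j))})

theorem stmt14 {n m : ℕ} (hnm : n = 2 * m)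
    (a b : Fin m → Fin n)
    (hM : Function.Bijective (Sum.elim a b)) -- `{a i, b i}` form a perfect matching, with bipartition `(range a, range b)`
    (σ τ : Equiv.Perm (Fin m)) (hst : σ ≠ τ) :
    ∃ (v : Fin n) (w : (matchPathGraph a b σ ⊔ matchPathGraph a b τ).Walk v v),
      w.IsCycle ∧ Even w.length ∧
      {e | e ∈ w.edges ∧ ∃ i : Fin m, e = s(a i, b i)}.ncard =
        {e | e ∈ w.edges ∧ ¬ ∃ i : Fin m, e = s(a i, b i)}.ncard := by
  classical
  set G := matchPathGraph a b σ ⊔ matchPathGraph a b τ with hG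
  have hinj := hM.1
  have hab : ∀ i j : Fin m, a i ≠ b j := by
    intro i j h
    have : (Sum.inl i : Fin m ⊕ Fin m) = Sum.inr j := hinj (by simpa using h)
    simp at this
  have ha : Function.Injective a := by
    intro i j h
    have : (Sum.inl i : Fin m ⊕ Fin m) = Sum.inl j := hinj (by simpa using h)
    simpa using this
  have hb : Function.Injective b := by
    intro i j h
    have : (Sum.inr i : Fin m ⊕ Fin m) = Sum.inr j := hinj (by simpa using h)
    simpa using this
  set R := Stmt14Aux.linkRel σ τ with hRdef
  -- adjacency lemmas
  have hmAdj : ∀ x : Fin m, G.Adj (a x) (b x) := by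
    intro x
    refine (SimpleGraph.sup_adj _ _ _ _).mpr (Or.inl ?_)
    rw [matchPathGraph, SimpleGraph.fromEdgeSet_adj]
    exact ⟨Or.inl ⟨x, rfl⟩, hab x x⟩
  have hlAdj : ∀ x y : Fin m, R x y → G.Adj (b x) (a y) := by
    rintro x y ⟨ρ, hρ, t, ht, rfl, rfl⟩
    have hne : b (ρ ⟨t, Nat.lt_of_succ_lt ht⟩) ≠ a (ρ ⟨t + 1, ht⟩) := fun h => hab _ _ h.symm
    have hmem : s(b (ρ ⟨t, Nat.lt_of_succ_lt ht⟩), a (ρ ⟨t + 1, ht⟩)) ∈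
        {e | ∃ i j : Fin m, (j : ℕ) = (i : ℕ) + 1 ∧ e = s(b (ρ i), a (ρ j))} :=
      ⟨⟨t, Nat.lt_of_succ_lt ht⟩, ⟨t + 1, ht⟩, rfl, rfl⟩
    rcases hρ with rfl | rfl
    · refine (SimpleGraph.sup_adj _ _ _ _).mpr (Or.inl ?_)
      rw [matchPathGraph, SimpleGraph.fromEdgeSet_adj]
      exact ⟨Or.inr hmem, hne⟩
    · refine (SimpleGraph.sup_adj _ _ _ _).mpr (Or.inr ?_)
      rw [matchPathGraph, SimpleGraph.fromEdgeSet_adj]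
      exact ⟨Or.inr hmem, hne⟩
  -- a simple cycle in the link relation
  have hcyc : ∃ (y : Fin m) (l : List (Fin m)),
      List.Chain R y (l ++ [y]) ∧ (y :: l).Nodup := by
    by_contra hno
    exact hst (Stmt14Aux.eq_of_no_cycle hno)
  obtain ⟨y, l, hch, hnd⟩ := hcyc
  have hlne : l ≠ [] := by
    rintro rfl
    exact Stmt14Aux.linkRel_ne (List.isChain_pair.mp hch) rfl
  -- the lifted walk
  set pl := (y :: l).zip (l ++ [y]) with hplDef
  have hplR : ∀ p ∈ pl, R p.1 p.2 := Stmt14Aux.chain_zip l y y hch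
  have hplfst : pl.map Prod.fst = y :: l := List.map_fst_zip (by simp)
  have hndfst : (pl.map Prod.fst).Nodup := by rw [hplfst]; exact hnd
  have hplnd : pl.Nodup := hndfst.of_map _
  have hplpair : pl.Pairwise fun p q => p.1 ≠ q.1 := List.pairwise_map.mp hndfst
  have hMM : ∀ p q : Fin m, s(a p, b p) = s(a q, b q) → p = q := by
    intro p q h
    rw [Sym2.eq_iff] at h
    rcases h with ⟨h1, -⟩ | ⟨h1, -⟩
    · exact ha h1
    · exact absurd h1 (hab _ _)
  have hML : ∀ p u v : Fin m, s(a p, b p) = s(b u, a v) → p = u ∧ p = v := by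
    intro p u v h
    rw [Sym2.eq_iff] at h
    rcases h with ⟨h1, -⟩ | ⟨h1, h2⟩
    · exact absurd h1 (hab _ _)
    · exact ⟨hb h2, ha h1⟩
  have hLL : ∀ u v u' v' : Fin m, s(b u, a v) = s(b u', a v') → u = u' ∧ v = v' := by
    intro u v u' v' h
    rw [Sym2.eq_iff] at h
    rcases h with ⟨h1, h2⟩ | ⟨h1, h2⟩
    · exact ⟨hb h1, ha h2⟩
    · exact absurd h2 (hab _ _)
  have hedges : (Stmt14Aux.walkOf hmAdj hlAdj l y y hch).edges
      = pl.flatMap fun p => [s(a p.1, b p.1), s(b p.1, a p.2)] :=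
    Stmt14Aux.walkOf_edges hmAdj hlAdj l y y hch
  have hlen : (Stmt14Aux.walkOf hmAdj hlAdj l y y hch).length = 2 * l.length + 2 :=
    Stmt14Aux.walkOf_length hmAdj hlAdj l y y hch
  refine ⟨a y, Stmt14Aux.walkOf hmAdj hlAdj l y y hch, ⟨⟨⟨?_⟩, ?_⟩, ?_⟩, ?_, ?_⟩
  · -- edges nodup
    rw [hedges, List.nodup_flatMap]
    constructor
    · intro p hp
      have hne := Stmt14Aux.linkRel_ne (hplR p hp)
      simp only [List.nodup_cons, List.mem_singleton, List.nodup_nil, and_true,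
        List.not_mem_nil, not_false_iff]
      intro h
      exact hne (hML _ _ _ h).2
    · refine hplpair.imp ?_
      intro p q hpq e he1 he2
      simp only [List.mem_cons, List.mem_singleton, List.not_mem_nil, or_false] at he1 he2
      rcases he1 with rfl | rfl <;> rcases he2 with h | h
      · exact hpq (hMM _ _ h)
      · exact hpq (hML _ _ _ h).1
      · exact hpq (hML _ _ _ h.symm).1.symm
      · exact hpq (hLL _ _ _ _ h).1
  · -- ne nil
    intro h
    rw [h] at hlen
    simp at hlen
  · -- support tail nodup
    rw [Stmt14Aux.walkOf_support hmAdj hlAdj l y y hch, List.map_cons, List.tail_cons]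
    exact List.Nodup.map hinj
      (Stmt14Aux.sum_list_nodup (List.nodup_cons.mp hnd).1 (List.nodup_cons.mp hnd).2)
  · -- even length
    rw [hlen]
    exact ⟨l.length + 1, by ring⟩
  · -- counting
    have h1 : {p : Fin m | p ∈ y :: l}.ncard = l.length + 1 := by
      rw [← List.coe_toFinset, Set.ncard_coe_finset, List.toFinset_card_of_nodup hnd]
      simp
    have h2 : {p : Fin m × Fin m | p ∈ pl}.ncard = l.length + 1 := by
      rw [← List.coe_toFinset, Set.ncard_coe_finset, List.toFinset_card_of_nodup hplnd]
      simp [hplDef]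
    have hS1 : {e | e ∈ (Stmt14Aux.walkOf hmAdj hlAdj l y y hch).edges ∧
          ∃ i : Fin m, e = s(a i, b i)}
        = (fun p : Fin m => s(a p, b p)) '' {p | p ∈ y :: l} := by
      ext e
      simp only [Set.mem_setOf_eq, Set.mem_image, hedges, List.mem_flatMap, List.mem_cons,
        List.mem_singleton, List.not_mem_nil, or_false]
      constructor
      · rintro ⟨⟨p, hp, he⟩, i, rfl⟩
        rcases he with he | he
        · refine ⟨p.1, ?_, he.symm⟩
          have hmm : p.1 ∈ y :: l := by
            rw [← hplfst]; exact List.mem_map_of_mem hp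
          simpa using hmm
        · exact absurd ((hML i p.1 p.2 he).1.symm.trans (hML i p.1 p.2 he).2)
            (Stmt14Aux.linkRel_ne (hplR p hp))
      · rintro ⟨p, hp, rfl⟩
        refine ⟨?_, ⟨p, rfl⟩⟩
        have hp' : p ∈ List.map Prod.fst pl := by
          rw [hplfst]; simpa using hp
        obtain ⟨q, hq, rfl⟩ := List.mem_map.mp hp'
        exact ⟨q, hq, Or.inl rfl⟩
    have hS2 : {e | e ∈ (Stmt14Aux.walkOf hmAdj hlAdj l y y hch).edges ∧
          ¬ ∃ i : Fin m, e = s(a i, b i)}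
        = (fun p : Fin m × Fin m => s(b p.1, a p.2)) '' {p | p ∈ pl} := by
      ext e
      simp only [Set.mem_setOf_eq, Set.mem_image, hedges, List.mem_flatMap, List.mem_cons,
        List.mem_singleton, List.not_mem_nil, or_false]
      constructor
      · rintro ⟨⟨p, hp, he⟩, hne⟩
        rcases he with rfl | rfl
        · exact absurd ⟨p.1, rfl⟩ hne
        · exact ⟨p, hp, rfl⟩
      · rintro ⟨p, hp, rfl⟩
        refine ⟨⟨p, hp, Or.inr rfl⟩, ?_⟩
        rintro ⟨i, hi⟩
        exact Stmt14Aux.linkRel_ne (hplR p hp)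
          ((hML i p.1 p.2 hi.symm).1.symm.trans (hML i p.1 p.2 hi.symm).2)
    rw [hS1, hS2,
      Set.ncard_image_of_injective _ (fun p q h => hMM p q h),
      Set.ncard_image_of_injective _
        (fun p q h => Prod.ext_iff.mpr ⟨(hLL _ _ _ _ h).1, (hLL _ _ _ _ h).2⟩),
      h1, h2]
end

section
/- For every integer c with c dividing n and c ≥ 2, there exists a family of at least (n/c - 1)! Hamiltonian paths in K_n such that the union of any two distinct members contains a cycle of length congruent to 2 modulo c (in particular, a cycle whose length is not divisible by c when c > 2). -/
open SimpleGraph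

namespace HamAux

variable {V : Type*}

/-- consecutive pairs of a list as `Sym2`s -/
def pairs (l : List V) : List (Sym2 V) := (l.zip l.tail).map fun p => s(p.1, p.2)

@[simp] lemma pairs_nil : pairs ([] : List V) = [] := rfl
@[simp] lemma pairs_single (a : V) : pairs [a] = [] := rfl
@[simp] lemma pairs_cons_cons (a b : V) (l : List V) :
    pairs (a :: b :: l) = s(a, b) :: pairs (b :: l) := rfl

lemma length_pairs : ∀ l : List V, (pairs l).length = l.length - 1
  | [] => rfl
  | [_] => rfl
  | a :: b :: l => by
      rw [pairs_cons_cons, List.length_cons, length_pairs (b :: l)]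
      simp

lemma mem_pairs_of : ∀ (l : List V) (i : ℕ) (h : i + 1 < l.length),
    s(l[i], l[i+1]) ∈ pairs l
  | a :: b :: l, 0, _ => by simp
  | a :: b :: l, i + 1, h => by
      have := mem_pairs_of (b :: l) i (by simpa using h)
      simpa using Or.inr this

lemma mem_pairs : ∀ {l : List V} {e : Sym2 V}, e ∈ pairs l →
    ∃ i, ∃ h : i + 1 < l.length, e = s(l[i], l[i+1])
  | [], e, h => by simp at h
  | [_], e, h => by simp at h
  | a :: b :: l, e, h => by
      rw [pairs_cons_cons, List.mem_cons] at h
      rcases h with h | h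
      · exact ⟨0, by simp, by simpa using h⟩
      · obtain ⟨i, hi, he⟩ := mem_pairs h
        exact ⟨i + 1, by simpa using hi, by simpa using he⟩

/-- graph consisting exactly of the consecutive-pair edges of `l` -/
def listGraph (l : List V) : SimpleGraph V := fromEdgeSet {e | e ∈ pairs l}

/-- build a walk along a chain -/
def walkOfChain (G : SimpleGraph V) :
    ∀ (a : V) (l : List V), List.Chain G.Adj a l →
      G.Walk a ((a :: l).getLast (List.cons_ne_nil _ _))
  | _, [], _ => Walk.nil
  | a, b :: l, h =>
      (Walk.cons (List.chain_cons.mp h).1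
        (walkOfChain G b l (List.chain_cons.mp h).2)).copy rfl
        (List.getLast_cons (List.cons_ne_nil _ _)).symm

@[simp] lemma support_walkOfChain (G : SimpleGraph V) :
    ∀ (a : V) (l : List V) (h : List.Chain G.Adj a l),
      (walkOfChain G a l h).support = a :: l
  | _, [], _ => rfl
  | a, b :: l, h => by
      rw [walkOfChain]
      simp [support_walkOfChain G b l]
      exact support_walkOfChain G b l _

@[simp] lemma edges_walkOfChain (G : SimpleGraph V) :
    ∀ (a : V) (l : List V) (h : List.Chain G.Adj a l),
      (walkOfChain G a l h).edges = pairs (a :: l)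
  | _, [], _ => rfl
  | a, b :: l, h => by
      rw [walkOfChain]
      simp [edges_walkOfChain G b l]
      exact edges_walkOfChain G b l _

@[simp] lemma length_walkOfChain (G : SimpleGraph V) (a : V) (l : List V)
    (h : List.Chain G.Adj a l) : (walkOfChain G a l h).length = l.length := by
  have := (walkOfChain G a l h).length_edges
  rw [edges_walkOfChain] at this
  rw [← this, length_pairs]
  simp


section Main

variable {c m : ℕ}

lemma lt_bound {a r : ℕ} (ha : a < m) (hr : r < c) : c * a + r < c * m := by
  calc c * a + r < c * a + c := by omega
    _ = c * (a + 1) := by ring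
    _ ≤ c * m := Nat.mul_le_mul_left c ha

lemma mul_add_inj {a1 a2 r1 r2 : ℕ} (hc : 0 < c) (h1 : r1 < c) (h2 : r2 < c)
    (h : c * a1 + r1 = c * a2 + r2) : a1 = a2 ∧ r1 = r2 := by
  have e1 : (c * a1 + r1) / c = a1 := by
    rw [Nat.mul_add_div hc, Nat.div_eq_of_lt h1]; omega
  have e2 : (c * a2 + r2) / c = a2 := by
    rw [Nat.mul_add_div hc, Nat.div_eq_of_lt h2]; omega
  have e3 := Nat.mul_add_mod c a1 r1
  have e4 := Nat.mul_add_mod c a2 r2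
  rw [Nat.mod_eq_of_lt h1] at e3
  rw [Nat.mod_eq_of_lt h2] at e4
  constructor
  · rw [← e1, ← e2, h]
  · rw [← e3, ← e4, h]

lemma div_lt_of_lt_mul' {i : ℕ} (hc : 0 < c) (hi : i < c * m) : i / c < m :=
  Nat.div_lt_iff_lt_mul hc |>.mpr (by rw [Nat.mul_comm] at hi; exact hi)

/-- the `i`-th vertex of the Hamiltonian path given by block ordering `σ` -/
def gg (hc : 2 ≤ c) (hm : 0 < m) (σ : Equiv.Perm (Fin m)) (i : ℕ) : Fin (c * m) :=
  ⟨c * (σ ⟨i / c % m, Nat.mod_lt _ hm⟩).val + i % c, by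
    exact lt_bound (σ _).isLt (Nat.mod_lt _ (by omega))⟩

lemma gg_val (hc : 2 ≤ c) (hm : 0 < m) (σ : Equiv.Perm (Fin m)) {q r : ℕ} (hq : q < m)
    (hr : r < c) : (gg hc hm σ (c * q + r)).val = c * (σ ⟨q, hq⟩).val + r := by
  have hc0 : 0 < c := by omega
  have h1 : (c * q + r) / c = q := by
    rw [Nat.mul_add_div hc0, Nat.div_eq_of_lt hr]; omega
  have h2 : (c * q + r) % c = r := by
    rw [Nat.mul_add_mod, Nat.mod_eq_of_lt hr]
  simp only [gg, h1, h2, Nat.mod_eq_of_lt hq]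

lemma gg_inj (hc : 2 ≤ c) (hm : 0 < m) (σ : Equiv.Perm (Fin m)) {i i' : ℕ} (hi : i < c * m)
    (hi' : i' < c * m) (h : gg hc hm σ i = gg hc hm σ i') : i = i' := by
  have hc0 : 0 < c := by omega
  have hqi : i / c < m := div_lt_of_lt_mul' hc0 hi
  have hqi' : i' / c < m := div_lt_of_lt_mul' hc0 hi'
  have e1 := Nat.div_add_mod i c
  have e2 := Nat.div_add_mod i' c
  rw [Fin.ext_iff] at h
  rw [← e1, ← e2] at h
  rw [gg_val hc hm σ hqi (Nat.mod_lt _ hc0), gg_val hc hm σ hqi' (Nat.mod_lt _ hc0)] at h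
  obtain ⟨hb, hr⟩ := mul_add_inj hc0 (Nat.mod_lt _ hc0) (Nat.mod_lt _ hc0) h
  have hb' : (⟨i / c, hqi⟩ : Fin m) = ⟨i' / c, hqi'⟩ := σ.injective (Fin.ext hb)
  rw [Fin.mk.injEq] at hb'
  rw [← e1, ← e2, hb', hr]

lemma gg_surj (hc : 2 ≤ c) (hm : 0 < m) (σ : Equiv.Perm (Fin m)) (v : Fin (c * m)) :
    ∃ i < c * m, gg hc hm σ i = v := by
  have hc0 : 0 < c := by omega
  have hq : v.val / c < m := div_lt_of_lt_mul' hc0 v.isLt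
  refine ⟨c * (σ.symm ⟨v.val / c, hq⟩).val + v.val % c,
    lt_bound (σ.symm _).isLt (Nat.mod_lt _ hc0), ?_⟩
  apply Fin.ext
  rw [gg_val hc hm σ (σ.symm _).isLt (Nat.mod_lt _ hc0), Equiv.apply_symm_apply]
  exact Nat.div_add_mod v.val c

/-- the vertex list of the path -/
def LL (hc : 2 ≤ c) (hm : 0 < m) (σ : Equiv.Perm (Fin m)) : List (Fin (c * m)) :=
  (List.range (c * m)).map (gg hc hm σ)

lemma LL_length (hc : 2 ≤ c) (hm : 0 < m) (σ : Equiv.Perm (Fin m)) :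
    (LL hc hm σ).length = c * m := by simp [LL]

lemma LL_get (hc : 2 ≤ c) (hm : 0 < m) (σ : Equiv.Perm (Fin m)) (i : ℕ)
    (hi : i < (LL hc hm σ).length) : (LL hc hm σ)[i] = gg hc hm σ i := by
  simp [LL]

lemma LL_nodup (hc : 2 ≤ c) (hm : 0 < m) (σ : Equiv.Perm (Fin m)) : (LL hc hm σ).Nodup := by
  refine List.Nodup.map_on ?_ List.nodup_range
  intro i hi i' hi' h
  rw [List.mem_range] at hi hi'
  exact gg_inj hc hm σ hi hi' h

lemma LL_mem (hc : 2 ≤ c) (hm : 0 < m) (σ : Equiv.Perm (Fin m)) (v : Fin (c * m)) :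
    v ∈ LL hc hm σ := by
  obtain ⟨i, hi, he⟩ := gg_surj hc hm σ v
  rw [LL, List.mem_map]
  exact ⟨i, List.mem_range.mpr hi, he⟩


/-- the path graph determined by block ordering `σ` -/
def GG (hc : 2 ≤ c) (hm : 0 < m) (σ : Equiv.Perm (Fin m)) : SimpleGraph (Fin (c * m)) :=
  listGraph (LL hc hm σ)

lemma mem_pairs_LL (hc : 2 ≤ c) (hm : 0 < m) (σ : Equiv.Perm (Fin m)) {i : ℕ}
    (hi : i + 1 < c * m) :
    s(gg hc hm σ i, gg hc hm σ (i + 1)) ∈ pairs (LL hc hm σ) := by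
  have h := mem_pairs_of (LL hc hm σ) i (by rw [LL_length]; exact hi)
  simp only [LL_get] at h
  exact h

lemma GG_adj (hc : 2 ≤ c) (hm : 0 < m) (σ : Equiv.Perm (Fin m)) {i : ℕ}
    (hi : i + 1 < c * m) :
    (GG hc hm σ).Adj (gg hc hm σ i) (gg hc hm σ (i + 1)) := by
  rw [GG, listGraph, fromEdgeSet_adj]
  refine ⟨mem_pairs_LL hc hm σ hi, fun h => ?_⟩
  have := gg_inj hc hm σ (by omega) hi h
  omega

lemma chain'_LL (hc : 2 ≤ c) (hm : 0 < m) (σ : Equiv.Perm (Fin m)) :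
    (LL hc hm σ).Chain' (GG hc hm σ).Adj := by
  refine List.isChain_iff_getElem.mpr ?_
  intro i hlen
  rw [LL_length] at hlen
  simp only [List.get_eq_getElem, LL_get]
  exact GG_adj hc hm σ (by omega)

/-- build a walk along a whole list -/
def walkOfList (G : SimpleGraph V) (l : List V) (hne : l ≠ []) (h : l.Chain' G.Adj) :
    G.Walk (l.head hne) (l.getLast hne) :=
  match l, hne, h with
  | a :: t, _, h => walkOfChain G a t h

@[simp] lemma support_walkOfList (G : SimpleGraph V) (l : List V) (hne : l ≠ [])
    (h : l.Chain' G.Adj) : (walkOfList G l hne h).support = l := by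
  match l, hne, h with
  | a :: t, _, h => exact support_walkOfChain G a t h

@[simp] lemma edges_walkOfList (G : SimpleGraph V) (l : List V) (hne : l ≠ [])
    (h : l.Chain' G.Adj) : (walkOfList G l hne h).edges = pairs l := by
  match l, hne, h with
  | a :: t, _, h => exact edges_walkOfChain G a t h

@[simp] lemma length_walkOfList (G : SimpleGraph V) (l : List V) (hne : l ≠ [])
    (h : l.Chain' G.Adj) : (walkOfList G l hne h).length = l.length - 1 := by
  match l, hne, h with
  | a :: t, _, h => exact (length_walkOfChain G a t h).trans (by simp)


lemma head_last_not_mem_pairs {l : List V} (hnd : l.Nodup) (hlen : 3 ≤ l.length)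
    {a b : V} (hb : ∃ h : 0 < l.length, b = l[0])
    (ha : ∃ h : l.length - 1 < l.length, a = l[l.length - 1]) :
    s(a, b) ∉ pairs l := by
  intro he
  obtain ⟨i, hi, heq⟩ := mem_pairs he
  obtain ⟨h0, rfl⟩ := hb
  obtain ⟨hL, rfl⟩ := ha
  rw [Sym2.eq_iff] at heq
  rcases heq with ⟨h1, h2⟩ | ⟨h1, h2⟩
  · have e1 := (hnd.getElem_inj_iff).mp h1
    have e2 := (hnd.getElem_inj_iff).mp h2
    omega
  · have e1 := (hnd.getElem_inj_iff).mp h1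
    have e2 := (hnd.getElem_inj_iff).mp h2
    omega

lemma isCycle_closed_walkOfChain (G : SimpleGraph V) (a b : V) (t : List V)
    (h : List.Chain G.Adj a (b :: t)) (hnd : (b :: t).Nodup)
    (hlen : 3 ≤ (b :: t).length)
    (hEq : ((a :: b :: t).getLast (List.cons_ne_nil _ _)) = a) :
    ((walkOfChain G a (b :: t) h).copy rfl hEq).IsCycle := by
  have hEq' : ((b :: t).getLast (List.cons_ne_nil _ _)) = a :=
    (List.getLast_cons (List.cons_ne_nil _ _)).symm.trans hEq
  rw [walkOfChain, Walk.copy_copy, Walk.copy_cons]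
  rw [Walk.cons_isCycle_iff]
  constructor
  · rw [Walk.isPath_def, Walk.support_copy]
    exact (congrArg List.Nodup (support_walkOfChain G b t _)).mpr hnd
  · rw [Walk.edges_copy]
    refine (congrArg (fun L => s(a, b) ∉ L) (edges_walkOfChain G b t _)).mpr ?_
    apply head_last_not_mem_pairs hnd hlen
    · exact ⟨by simp, rfl⟩
    · refine ⟨by simp, ?_⟩
      rw [← hEq', List.getLast_eq_getElem]

lemma isCycle_closed_walkOfList (G : SimpleGraph V) (l : List V) (hne : l ≠ [])
    (hch : l.Chain' G.Adj) (hnd : l.tail.Nodup) (hlen : 4 ≤ l.length)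
    (hEq : l.getLast hne = l.head hne) :
    ∃ w : G.Walk (l.head hne) (l.head hne), w.IsCycle ∧ w.length = l.length - 1 := by
  match l with
  | [] => simp at hne
  | [a] => simp at hlen
  | a :: b :: t =>
    have hch' : List.Chain G.Adj a (b :: t) := hch
    have hEq' : ((a :: b :: t).getLast (List.cons_ne_nil _ _)) = a := hEq
    refine ⟨(walkOfChain G a (b :: t) hch').copy rfl hEq', ?_, ?_⟩
    · apply isCycle_closed_walkOfChain G a b t hch' hnd (by simpa using hlen) hEq'
    · exact (Walk.length_copy _ _ _).trans ((length_walkOfChain G a (b :: t) hch').trans (by simp))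

lemma pairs_not_diag {l : List V} (hl : l.Nodup) {e : Sym2 V} (he : e ∈ pairs l) :
    ¬ e.IsDiag := by
  obtain ⟨i, hi, rfl⟩ := mem_pairs he
  rw [Sym2.isDiag_iff_proj_eq]
  intro h
  have := (List.Nodup.getElem_inj_iff hl).mp h
  omega

lemma GG_isHamPath (hc : 2 ≤ c) (hm : 0 < m) (σ : Equiv.Perm (Fin m)) :
    IsHamPathGraph (GG hc hm σ) := by
  have hne : LL hc hm σ ≠ [] := by
    have := LL_length hc hm σ
    intro h
    rw [h] at this
    simp only [List.length_nil] at this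
    exact Nat.mul_ne_zero (by omega) (by omega) this.symm
  refine ⟨_, _, walkOfList _ _ hne (chain'_LL hc hm σ), ?_, ?_⟩
  · intro v
    rw [support_walkOfList]
    exact List.count_eq_one_of_mem (LL_nodup hc hm σ) (LL_mem hc hm σ v)
  · rw [edges_walkOfList]
    show (fromEdgeSet _).edgeSet = _
    rw [edgeSet_fromEdgeSet]
    ext e
    simp only [Set.mem_diff, Set.mem_setOf_eq]
    exact ⟨fun h => h.1, fun h => ⟨h, pairs_not_diag (LL_nodup hc hm σ) h⟩⟩

lemma gg_agree (hc : 2 ≤ c) (hm : 0 < m) {σ τ : Equiv.Perm (Fin m)} {K : ℕ}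
    (hagree : ∀ p : Fin m, p.val < K → σ p = τ p) {x : ℕ} (hx : x < c * K) :
    gg hc hm σ x = gg hc hm τ x := by
  have hc0 : 0 < c := by omega
  have hdiv : x / c < K := by
    rw [Nat.div_lt_iff_lt_mul hc0, Nat.mul_comm]
    exact hx
  apply Fin.ext
  show c * (σ ⟨x / c % m, _⟩).val + x % c = c * (τ ⟨x / c % m, _⟩).val + x % c
  rw [hagree _ (lt_of_le_of_lt (Nat.mod_le _ _) hdiv)]

lemma GG_cycle (hc : 2 ≤ c) (hm : 0 < m) (σ τ : Equiv.Perm (Fin m))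
    (h0σ : σ ⟨0, hm⟩ = ⟨0, hm⟩) (h0τ : τ ⟨0, hm⟩ = ⟨0, hm⟩) (hst : σ ≠ τ) :
    HasCycleLen (GG hc hm σ ⊔ GG hc hm τ) (fun l => l % c = 2 % c) := by
  classical
  have hc0 : 0 < c := by omega
  set D : Finset (Fin m) := Finset.univ.filter (fun i => σ i ≠ τ i) with hD
  have hDne : D.Nonempty := by
    by_contra h
    rw [Finset.not_nonempty_iff_eq_empty] at h
    apply hst; apply Equiv.ext; intro i
    by_contra hi
    have hmem : i ∈ D := by simp [hD, hi]
    rw [h] at hmem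
    simp at hmem
  set k := D.min' hDne with hk
  have hkD : k ∈ D := D.min'_mem hDne
  have hkdiff : σ k ≠ τ k := by simpa [hD] using hkD
  have hbelow : ∀ i : Fin m, i < k → σ i = τ i := by
    intro i hik
    by_contra hi
    have hmem : i ∈ D := by simp [hD, hi]
    exact absurd (D.min'_le i hmem) (not_le.mpr hik)
  have hk0 : 1 ≤ k.val := by
    rcases Nat.eq_zero_or_pos k.val with h | h
    · exfalso; apply hkdiff
      have hke : k = ⟨0, hm⟩ := Fin.ext h
      rw [hke, h0σ, h0τ]
    · exact h
  set j := τ.symm (σ k) with hj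
  have hτj : τ j = σ k := Equiv.apply_symm_apply τ _
  have hkj : k < j := by
    rcases lt_trichotomy k j with h | h | h
    · exact h
    · exact absurd (h ▸ hτj : τ k = σ k) (Ne.symm hkdiff)
    · exfalso
      have h1 : σ j = τ j := hbelow j h
      have h2 : σ j = σ k := by rw [h1, hτj]
      exact (ne_of_lt h) (σ.injective h2)
  set K := k.val with hKdef
  set J := j.val with hJdef
  have hJm : J < m := j.isLt
  have hKJ : K < J := hkj
  obtain ⟨d, hd1, hd2⟩ : ∃ d, J = K + d ∧ 1 ≤ d := ⟨J - K, by omega, by omega⟩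
  -- linear facts about the products
  have e1 : c * J = c * K + c * d := by rw [hd1]; ring
  have e2 : c ≤ c * K := by
    calc c = c * 1 := (Nat.mul_one c).symm
      _ ≤ c * K := Nat.mul_le_mul_left c hk0
  have e3 : c ≤ c * d := by
    calc c = c * 1 := (Nat.mul_one c).symm
      _ ≤ c * d := Nat.mul_le_mul_left c hd2
  have e4 : c * J + c ≤ c * m := by
    calc c * J + c = c * (J + 1) := by ring
      _ ≤ c * m := Nat.mul_le_mul_left c (by omega)
  set N := c * d + 1 with hN
  set tl : List (Fin (c * m)) :=
    (List.range (N + 1)).map (fun t => gg hc hm τ (c * K - 1 + t)) with htl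
  set a := gg hc hm σ (c * K) with ha
  have htl_len : tl.length = N + 1 := by simp [htl]
  have htl_get : ∀ (i : ℕ) (h : i < tl.length), tl[i] = gg hc hm τ (c * K - 1 + i) := by
    intro i h
    simp [htl]
  -- head equals tail vertex
  have ha' : a = gg hc hm τ (c * J) := by
    apply Fin.ext
    have v1 := gg_val hc hm σ (q := K) (r := 0) k.isLt hc0
    have v2 := gg_val hc hm τ (q := J) (r := 0) hJm hc0
    rw [Nat.add_zero] at v1 v2
    rw [ha, v1, v2]
    have : (⟨K, k.isLt⟩ : Fin m) = k := Fin.eta k k.isLt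
    rw [this]
    have : (⟨J, hJm⟩ : Fin m) = j := Fin.eta j j.isLt
    rw [this, hτj]
  -- the chain
  have hch : (a :: tl).Chain' (GG hc hm σ ⊔ GG hc hm τ).Adj := by
    refine List.isChain_iff_getElem.mpr ?_
    intro i hi
    simp only [List.length_cons, htl_len] at hi
    rcases Nat.eq_zero_or_pos i with rfl | hpos
    · simp only [List.get_eq_getElem, List.getElem_cons_zero, List.getElem_cons_succ]
      rw [htl_get 0 (by omega), Nat.add_zero]
      have hag : gg hc hm τ (c * K - 1) = gg hc hm σ (c * K - 1) := by
        refine (gg_agree hc hm (K := K) ?_ (x := c * K - 1) (by omega)).symm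
        intro p hp
        exact hbelow p hp
      rw [hag]
      have hstep : (GG hc hm σ).Adj (gg hc hm σ (c * K - 1)) (gg hc hm σ (c * K - 1 + 1)) :=
        GG_adj hc hm σ (by omega)
      have hck : c * K - 1 + 1 = c * K := by omega
      rw [hck] at hstep
      exact Or.inl hstep.symm
    · obtain ⟨i', rfl⟩ : ∃ i', i = i' + 1 := ⟨i - 1, by omega⟩
      simp only [List.get_eq_getElem, List.getElem_cons_succ]
      rw [htl_get i' (by omega), htl_get (i' + 1) (by omega)]
      have harr : c * K - 1 + (i' + 1) = (c * K - 1 + i') + 1 := by omega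
      rw [harr]
      exact Or.inr (GG_adj hc hm τ (by omega))
  -- nodup of the tail
  have hnd : tl.Nodup := by
    rw [htl]
    refine List.Nodup.map_on ?_ List.nodup_range
    intro t1 ht1 t2 ht2 hgg
    rw [List.mem_range] at ht1 ht2
    have := gg_inj hc hm τ (by omega) (by omega) hgg
    omega
  have hlast : (a :: tl).getLast (List.cons_ne_nil _ _) = (a :: tl).head (List.cons_ne_nil _ _) := by
    have h1 : (a :: tl).getLast (List.cons_ne_nil _ _) = tl.getLast (by
      intro h; rw [h] at htl_len; simp at htl_len) := List.getLast_cons _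
    rw [h1, List.getLast_eq_getElem]
    rw [htl_get (tl.length - 1) (by rw [htl_len]; omega)]
    have : c * K - 1 + (tl.length - 1) = c * J := by rw [htl_len]; omega
    rw [this, List.head_cons, ha']
  obtain ⟨w, hw, hwl⟩ := isCycle_closed_walkOfList (GG hc hm σ ⊔ GG hc hm τ) (a :: tl)
    (List.cons_ne_nil _ _) hch (by simpa using hnd) (by simp [htl_len]; omega) hlast
  refine ⟨(a :: tl).head (List.cons_ne_nil _ _), w, hw, ?_⟩
  rw [hwl]
  simp only [List.length_cons, htl_len]
  show (N + 1 + 1 - 1) % c = 2 % c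
  have harith : N + 1 + 1 - 1 = 2 + d * c := by rw [hN]; ring_nf; omega
  rw [harith, Nat.add_mul_mod_self_right]

lemma GG_inj (hc : 2 ≤ c) (hm : 0 < m) (σ τ : Equiv.Perm (Fin m))
    (h0σ : σ ⟨0, hm⟩ = ⟨0, hm⟩) (h0τ : τ ⟨0, hm⟩ = ⟨0, hm⟩)
    (hGG : GG hc hm σ = GG hc hm τ) : σ = τ := by
  have hc0 : 0 < c := by omega
  have hpair : ∀ e, e ∈ pairs (LL hc hm σ) ↔ e ∈ pairs (LL hc hm τ) := by
    intro e
    have hE : (GG hc hm σ).edgeSet = (GG hc hm τ).edgeSet := by rw [hGG]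
    rw [GG, GG, listGraph, listGraph, edgeSet_fromEdgeSet, edgeSet_fromEdgeSet] at hE
    constructor
    · intro h
      have : e ∈ ({e | e ∈ pairs (LL hc hm σ)} \ Sym2.diagSet) :=
        ⟨h, pairs_not_diag (LL_nodup hc hm σ) h⟩
      rw [hE] at this
      exact this.1
    · intro h
      have : e ∈ ({e | e ∈ pairs (LL hc hm τ)} \ Sym2.diagSet) :=
        ⟨h, pairs_not_diag (LL_nodup hc hm τ) h⟩
      rw [← hE] at this
      exact this.1
  have main : ∀ x : ℕ, ∀ hx : x < m, σ ⟨x, hx⟩ = τ ⟨x, hx⟩ := by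
    intro x
    induction x using Nat.strong_induction_on with
    | _ x IH =>
      intro hx
      rcases Nat.eq_zero_or_pos x with rfl | hxpos
      · rw [h0σ, h0τ]
      · obtain ⟨x', rfl⟩ : ∃ x', x = x' + 1 := ⟨x - 1, by omega⟩
        set x := x' + 1
        have hagree : ∀ p : Fin m, p.val < x → σ p = τ p := by
          intro p hp
          have := IH p.val hp p.isLt
          exact this
        have ecx : c * x = c * x' + c := by ring
        have ebound : c * x + c ≤ c * m := by
          calc c * x + c = c * (x + 1) := by ring
            _ ≤ c * m := Nat.mul_le_mul_left c (by omega)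
        have ecge : c ≤ c * x := by
          calc c = c * 1 := (Nat.mul_one c).symm
            _ ≤ c * x := Nat.mul_le_mul_left c (by omega)
        have hmem : s(gg hc hm σ (c * x - 1), gg hc hm σ (c * x)) ∈ pairs (LL hc hm σ) := by
          have h := mem_pairs_LL hc hm σ (i := c * x - 1) (by omega)
          have h1 : c * x - 1 + 1 = c * x := by omega
          rwa [h1] at h
        rw [hpair] at hmem
        obtain ⟨i, hi, heq⟩ := mem_pairs hmem
        rw [LL_length] at hi
        simp only [LL_get] at heq
        have hagg : gg hc hm σ (c * x - 1) = gg hc hm τ (c * x - 1) :=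
          gg_agree hc hm (K := x) hagree (by omega)
        rw [hagg] at heq
        rw [Sym2.eq_iff] at heq
        have hvx := gg_val hc hm σ (q := x) (r := 0) hx hc0
        have hvx' := gg_val hc hm τ (q := x) (r := 0) hx hc0
        rcases heq with ⟨h1, h2⟩ | ⟨h1, h2⟩
        · have hieq : c * x - 1 = i := gg_inj hc hm τ (by omega) (by omega) h1
          have hi1 : i + 1 = c * x := by omega
          rw [hi1] at h2
          rw [Nat.add_zero] at hvx hvx'
          rw [Fin.ext_iff] at h2
          rw [hvx, hvx'] at h2
          exact Nat.eq_of_mul_eq_mul_left hc0 h2 |> Fin.ext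
        · -- i + 1 = c * x - 1, so i = c * x - 2
          have hx'm : x' < m := by omega
          have hieq : c * x - 1 = i + 1 := gg_inj hc hm τ (by omega) (by omega) h1
          have hi2 : i = c * x' + (c - 2) := by omega
          rw [hi2] at h2
          have hvt := gg_val hc hm τ (q := x') (r := c - 2) hx'm (by omega)
          rw [Fin.ext_iff] at h2
          rw [Nat.add_zero] at hvx
          rw [hvx, hvt] at h2
          have h3 : c * (σ ⟨x, hx⟩).val + 0 = c * (τ ⟨x', hx'm⟩).val + (c - 2) := by omega
          obtain ⟨hb, hr⟩ := mul_add_inj hc0 (by omega) (by omega) h3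
          exfalso
          have httσ : τ ⟨x', hx'm⟩ = σ ⟨x', hx'm⟩ :=
            (hagree ⟨x', hx'm⟩ (by simp [x])).symm
          have hσσ : σ ⟨x, hx⟩ = σ ⟨x', hx'm⟩ :=
            Fin.ext (hb.trans (congrArg Fin.val httσ))
          have h5 := σ.injective hσσ
          rw [Fin.mk.injEq] at h5
          omega
  apply Equiv.ext
  intro q
  exact main q.val q.isLt

def fixEquiv (m' : ℕ) : {σ : Equiv.Perm (Fin (m' + 1)) // σ 0 = 0} ≃ Equiv.Perm (Fin m') where
  toFun s := (Equiv.Perm.decomposeFin s.1).2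
  invFun e := ⟨Equiv.Perm.decomposeFin.symm (0, e), by
    rw [Equiv.Perm.decomposeFin_symm_apply_zero]⟩
  left_inv s := by
    apply Subtype.ext
    have h2 : Equiv.Perm.decomposeFin.symm (Equiv.Perm.decomposeFin s.1) = s.1 :=
      Equiv.symm_apply_apply _ _
    have h1 : (Equiv.Perm.decomposeFin s.1).1 = 0 := by
      have h3 := Equiv.Perm.decomposeFin_symm_apply_zero
        (Equiv.Perm.decomposeFin s.1).1 (Equiv.Perm.decomposeFin s.1).2
      rw [Prod.mk.eta, h2] at h3
      rw [← h3]; exact s.2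
    show Equiv.Perm.decomposeFin.symm (0, (Equiv.Perm.decomposeFin s.1).2) = s.1
    calc Equiv.Perm.decomposeFin.symm (0, (Equiv.Perm.decomposeFin s.1).2)
        = Equiv.Perm.decomposeFin.symm
            ((Equiv.Perm.decomposeFin s.1).1, (Equiv.Perm.decomposeFin s.1).2) := by rw [h1]
      _ = s.1 := by rw [Prod.mk.eta, h2]
  right_inv e := by
    have h := Equiv.apply_symm_apply Equiv.Perm.decomposeFin (0, e)
    exact congrArg Prod.snd h

lemma card_fix {m : ℕ} (hm : 0 < m) :
    Set.ncard {σ : Equiv.Perm (Fin m) | σ ⟨0, hm⟩ = ⟨0, hm⟩} = (m - 1).factorial := by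
  obtain ⟨m', rfl⟩ : ∃ m', m = m' + 1 := ⟨m - 1, by omega⟩
  have hz : (⟨0, hm⟩ : Fin (m' + 1)) = 0 := by ext; simp
  rw [hz]
  have h1 : {σ : Equiv.Perm (Fin (m' + 1)) | σ 0 = 0}.ncard =
      Nat.card {σ : Equiv.Perm (Fin (m' + 1)) // σ 0 = 0} :=
    (Nat.card_coe_set_eq _).symm
  rw [h1, Nat.card_congr (fixEquiv m'), Nat.card_eq_fintype_card, Fintype.card_perm,
    Fintype.card_fin]
  simp

end Main
end HamAux

theorem stmt15 {n c : ℕ} (hc : 2 ≤ c) (hn : 0 < n) (hcn : c ∣ n) :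
    ∃ F : Set (SimpleGraph (Fin n)),
      (∀ G ∈ F, IsHamPathGraph G) ∧
      (∀ G ∈ F, ∀ H ∈ F, G ≠ H → HasCycleLen (G ⊔ H) (fun l => l % c = 2 % c)) ∧
      (n / c - 1).factorial ≤ F.ncard := by
  obtain ⟨m, rfl⟩ := hcn
  have hm : 0 < m := by
    rcases Nat.eq_zero_or_pos m with rfl | h
    · simp at hn
    · exact h
  refine ⟨(fun σ : Equiv.Perm (Fin m) => HamAux.GG hc hm σ) ''
      {σ | σ ⟨0, hm⟩ = ⟨0, hm⟩}, ?_, ?_, ?_⟩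
  · rintro G ⟨σ, hσ, rfl⟩
    exact HamAux.GG_isHamPath hc hm σ
  · rintro G ⟨σ, hσ, rfl⟩ H ⟨τ, hτ, rfl⟩ hne
    exact HamAux.GG_cycle hc hm σ τ hσ hτ (fun h => hne (by rw [h]))
  · have hq : c * m / c = m := Nat.mul_div_cancel_left m (by omega)
    rw [hq]
    have hinj : Set.InjOn (fun σ : Equiv.Perm (Fin m) => HamAux.GG hc hm σ)
        {σ | σ ⟨0, hm⟩ = ⟨0, hm⟩} := fun σ hσ τ hτ h => HamAux.GG_inj hc hm σ τ hσ hτ h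
    rw [Set.ncard_image_of_injOn hinj, HamAux.card_fix hm]
end

section
/- For n divisible by 4, there exists a family of at least 2^(n/4) Hamiltonian paths in K_n such that the union of any two distinct members contains a copy of K_4 (four mutually adjacent vertices). -/
open SimpleGraph

/-! ### Auxiliary construction -/

/-- In-block permutation. -/
def bperm (b : Bool) (i : ℕ) : ℕ :=
  if b = false then i else if i = 0 then 2 else if i = 1 then 0 else if i = 2 then 3 else 1

lemma bperm_lt (b : Bool) {i : ℕ} (h : i < 4) : bperm b i < 4 := by
  unfold bperm; split_ifs <;> omega

lemma bperm_inj (b : Bool) {i j : ℕ} (hi : i < 4) (hj : j < 4)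
    (h : bperm b i = bperm b j) : i = j := by
  unfold bperm at h; split_ifs at h <;> omega

lemma div4_lt {n p : ℕ} (hn : 4 ∣ n) (h : p < n) : p / 4 < n / 4 := by omega

lemma fv_bound {n p : ℕ} (hn : 4 ∣ n) (h : p < n) {r : ℕ} (hr : r < 4) :
    4 * (p / 4) + r < n := by omega

/-- Proof-free access to the block bits. -/
def epsb {n : ℕ} (ε : Fin (n / 4) → Bool) (m : ℕ) : Bool :=
  if h : m < n / 4 then ε ⟨m, h⟩ else false

lemma epsb_eq {n : ℕ} (ε : Fin (n / 4) → Bool) (k : Fin (n / 4)) : epsb ε k.val = ε k := by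
  unfold epsb
  rw [dif_pos k.isLt, Fin.eta]

/-- Vertex at position `p` of the Hamiltonian path determined by `ε`. -/
def fv {n : ℕ} (hn : 4 ∣ n) (ε : Fin (n / 4) → Bool) (p : Fin n) : Fin n :=
  ⟨4 * (p.val / 4) + bperm (epsb ε (p.val / 4)) (p.val % 4),
    fv_bound hn p.isLt (bperm_lt _ (Nat.mod_lt _ (by omega)))⟩

lemma fv_val_nat {n : ℕ} (hn : 4 ∣ n) (ε : Fin (n / 4) → Bool) (q : ℕ) (hq : q < n) :
    (fv hn ε ⟨q, hq⟩ : ℕ) = 4 * (q / 4) + bperm (epsb ε (q / 4)) (q % 4) := rfl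

lemma fv_val {n : ℕ} (hn : 4 ∣ n) (ε : Fin (n / 4) → Bool) (k t : ℕ) (hk : k < n / 4)
    (ht : t < 4) (h : 4 * k + t < n) :
    (fv hn ε ⟨4 * k + t, h⟩ : ℕ) = 4 * k + bperm (ε ⟨k, hk⟩) t := by
  have h1 : (4 * k + t) / 4 = k := by omega
  have h2 : (4 * k + t) % 4 = t := by omega
  rw [fv_val_nat hn ε _ h, h1, h2, epsb_eq ε ⟨k, hk⟩]

lemma fv_inj {n : ℕ} (hn : 4 ∣ n) (ε : Fin (n / 4) → Bool) :
    Function.Injective (fv hn ε) := by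
  intro p q h
  have hv : (fv hn ε p : ℕ) = (fv hn ε q : ℕ) := congrArg Fin.val h
  have hp : (fv hn ε p : ℕ) = 4 * (p.val / 4) + bperm (epsb ε (p.val / 4)) (p.val % 4) := rfl
  have hq : (fv hn ε q : ℕ) = 4 * (q.val / 4) + bperm (epsb ε (q.val / 4)) (q.val % 4) := rfl
  rw [hp, hq] at hv
  have h1 : bperm (epsb ε (p.val / 4)) (p.val % 4) < 4 := bperm_lt _ (by omega)
  have h2 : bperm (epsb ε (q.val / 4)) (q.val % 4) < 4 := bperm_lt _ (by omega)
  have hdiv : p.val / 4 = q.val / 4 := by omega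
  rw [hdiv] at hv
  have hper : bperm (epsb ε (q.val / 4)) (p.val % 4) = bperm (epsb ε (q.val / 4)) (q.val % 4) := by
    omega
  have hmod : p.val % 4 = q.val % 4 := bperm_inj _ (by omega) (by omega) hper
  exact Fin.ext (by omega)

/-- The list of vertices in path order. -/
def Lε {n : ℕ} (hn : 4 ∣ n) (ε : Fin (n / 4) → Bool) : List (Fin n) :=
  (List.finRange n).map (fv hn ε)

/-- The list of consecutive-pair edges of a list. -/
def edgesOf {α : Type*} (l : List α) : List (Sym2 α) :=
  l.zipWith (fun a b => s(a, b)) l.tail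

lemma mem_edgesOf_iff {α : Type*} {l : List α} {e : Sym2 α} :
    e ∈ edgesOf l ↔ ∃ (p : ℕ) (h : p + 1 < l.length), e = s(l[p], l[p+1]) := by
  unfold edgesOf
  rw [List.mem_iff_getElem]
  constructor
  · rintro ⟨i, hi, rfl⟩
    rw [List.length_zipWith, List.length_tail] at hi
    refine ⟨i, by omega, ?_⟩
    rw [List.getElem_zipWith]
    congr 1
    rw [List.getElem_tail]
  · rintro ⟨p, h, rfl⟩
    refine ⟨p, ?_, ?_⟩
    · rw [List.length_zipWith, List.length_tail]; omega
    · rw [List.getElem_zipWith]; congr 1; rw [List.getElem_tail]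

/-- The graph of the Hamiltonian path determined by `ε`. -/
def Gε {n : ℕ} (hn : 4 ∣ n) (ε : Fin (n / 4) → Bool) : SimpleGraph (Fin n) :=
  fromEdgeSet {e | e ∈ edgesOf (Lε hn ε)}

lemma Lε_getElem {n : ℕ} (hn : 4 ∣ n) (ε : Fin (n / 4) → Bool) (p : ℕ) (hp : p < n)
    (hp' : p < (Lε hn ε).length) : (Lε hn ε)[p] = fv hn ε ⟨p, hp⟩ := by
  simp [Lε]

lemma Lε_length {n : ℕ} (hn : 4 ∣ n) (ε : Fin (n / 4) → Bool) : (Lε hn ε).length = n := by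
  simp [Lε]

lemma edge_mem_Gε {n : ℕ} (hn : 4 ∣ n) (ε : Fin (n / 4) → Bool) (p : ℕ) (hp : p + 1 < n) :
    s(fv hn ε ⟨p, by omega⟩, fv hn ε ⟨p+1, hp⟩) ∈ edgesOf (Lε hn ε) := by
  rw [mem_edgesOf_iff]
  refine ⟨p, by rw [Lε_length]; omega, ?_⟩
  rw [Lε_getElem hn ε p (by omega), Lε_getElem hn ε (p+1) hp]

/-- Walk along a nodup list in the complete graph. -/
def wol {n : ℕ} : (a : Fin n) → (l : List (Fin n)) → (a :: l).Nodup →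
    Σ v, (⊤ : SimpleGraph (Fin n)).Walk a v
  | a, [], _ => ⟨a, SimpleGraph.Walk.nil⟩
  | a, b :: l, h =>
    ⟨(wol b l h.of_cons).1,
      SimpleGraph.Walk.cons
        (by
          rw [top_adj]
          intro hab
          exact (List.nodup_cons.1 h).1 (hab ▸ (List.mem_cons_self : b ∈ b :: l)))
        (wol b l h.of_cons).2⟩

lemma wol_support {n : ℕ} : ∀ (a : Fin n) (l : List (Fin n)) (h : (a :: l).Nodup),
    (wol a l h).2.support = a :: l
  | a, [], _ => by simp [wol]
  | a, b :: l, h => by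
    simp only [wol, SimpleGraph.Walk.support_cons]
    rw [wol_support b l h.of_cons]

lemma wol_edges {n : ℕ} : ∀ (a : Fin n) (l : List (Fin n)) (h : (a :: l).Nodup),
    (wol a l h).2.edges = edgesOf (a :: l)
  | a, [], _ => by simp [wol, edgesOf]
  | a, b :: l, h => by
    simp only [wol, SimpleGraph.Walk.edges_cons]
    rw [wol_edges b l h.of_cons]
    simp [edgesOf]

lemma Lε_nodup {n : ℕ} (hn : 4 ∣ n) (ε : Fin (n / 4) → Bool) : (Lε hn ε).Nodup :=
  (List.nodup_finRange n).map (fv_inj hn ε)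

lemma Lε_mem {n : ℕ} (hn : 4 ∣ n) (ε : Fin (n / 4) → Bool) (v : Fin n) : v ∈ Lε hn ε := by
  obtain ⟨p, rfl⟩ := Finite.surjective_of_injective (fv_inj hn ε) v
  exact List.mem_map.2 ⟨p, List.mem_finRange p, rfl⟩

lemma edgesOf_not_diag {n : ℕ} (hn : 4 ∣ n) (ε : Fin (n / 4) → Bool) {e : Sym2 (Fin n)}
    (he : e ∈ edgesOf (Lε hn ε)) : ¬ e.IsDiag := by
  rw [mem_edgesOf_iff] at he
  obtain ⟨p, h, rfl⟩ := he
  rw [Sym2.isDiag_iff_proj_eq]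
  exact fun hEq => by
    have := List.Nodup.getElem_inj_iff (Lε_nodup hn ε) |>.1 hEq
    omega

lemma Gε_edgeSet {n : ℕ} (hn : 4 ∣ n) (ε : Fin (n / 4) → Bool) :
    (Gε hn ε).edgeSet = {e | e ∈ edgesOf (Lε hn ε)} := by
  rw [Gε, edgeSet_fromEdgeSet]
  ext e
  simp only [Set.mem_diff, Set.mem_setOf_eq]
  exact ⟨fun h => h.1, fun h => ⟨h, edgesOf_not_diag hn ε h⟩⟩

lemma Gε_isHamPath {n : ℕ} (hn : 4 ∣ n) (hpos : 0 < n) (ε : Fin (n / 4) → Bool) :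
    IsHamPathGraph (Gε hn ε) := by
  have hne : Lε hn ε ≠ [] := by
    intro h; rw [← List.length_eq_zero_iff] at h; rw [Lε_length] at h; omega
  obtain ⟨a, l, hal⟩ : ∃ a l, Lε hn ε = a :: l := by
    cases h : Lε hn ε with
    | nil => exact absurd h hne
    | cons a l => exact ⟨a, l, rfl⟩
  have hnd : (a :: l).Nodup := hal ▸ Lε_nodup hn ε
  set P := wol a l hnd with hP
  have hedges : P.2.edges = edgesOf (Lε hn ε) := by rw [wol_edges, hal]
  have hsup : P.2.support = Lε hn ε := by rw [wol_support, hal]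
  have htr : ∀ e ∈ P.2.edges, e ∈ (Gε hn ε).edgeSet := by
    intro e he
    rw [Gε_edgeSet]
    exact hedges ▸ he
  refine ⟨a, P.1, P.2.transfer _ htr, ?_, ?_⟩
  · intro v
    rw [SimpleGraph.Walk.support_transfer, hsup]
    exact List.count_eq_one_of_mem (Lε_nodup hn ε) (Lε_mem hn ε v)
  · rw [Gε_edgeSet]
    ext e
    rw [SimpleGraph.Walk.edges_transfer, hedges]

lemma Gε_adj_of {n : ℕ} (hn : 4 ∣ n) (ε : Fin (n / 4) → Bool) (k : ℕ) (hk : k < n / 4)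
    (t : ℕ) (ht : t < 3) (a b : Fin n)
    (ha : a.val = 4 * k + bperm (ε ⟨k, hk⟩) t)
    (hb : b.val = 4 * k + bperm (ε ⟨k, hk⟩) (t + 1)) :
    (Gε hn ε).Adj a b := by
  have hb1 : bperm (ε ⟨k, hk⟩) t < 4 := bperm_lt _ (by omega)
  have hb2 : bperm (ε ⟨k, hk⟩) (t+1) < 4 := bperm_lt _ (by omega)
  have hne : bperm (ε ⟨k, hk⟩) t ≠ bperm (ε ⟨k, hk⟩) (t+1) := by
    intro h; have := bperm_inj _ (show t < 4 by omega) (show t + 1 < 4 by omega) h; omega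
  have hpn : 4 * k + t + 1 < n := by omega
  have hmem := edge_mem_Gε hn ε (4 * k + t) hpn
  rw [Gε, fromEdgeSet_adj]
  have e1 : fv hn ε ⟨4*k+t, by omega⟩ = a :=
    Fin.ext ((fv_val hn ε k t hk (by omega) (by omega)).trans ha.symm)
  have e2 : fv hn ε ⟨4*k+t+1, hpn⟩ = b := by
    have heq : (⟨4*k+t+1, hpn⟩ : Fin n) = ⟨4*k+(t+1), by omega⟩ := Fin.mk_eq_mk.mpr (by omega)
    rw [heq]
    exact Fin.ext ((fv_val hn ε k (t+1) hk (by omega) (by omega)).trans hb.symm)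
  rw [e1, e2] at hmem
  refine ⟨hmem, fun hEq => hne ?_⟩
  have := congrArg Fin.val hEq
  omega

/-- Every pair in a block is covered by one of the two in-block paths. -/
lemma bperm_cover : ∀ i j : Fin 4, i ≠ j → ∃ (c : Bool) (t : Fin 3),
    (bperm c t.val = i.val ∧ bperm c (t.val + 1) = j.val) ∨
    (bperm c t.val = j.val ∧ bperm c (t.val + 1) = i.val) := by decide

lemma bool_eq_or {a b c : Bool} (h : a ≠ b) : c = a ∨ c = b := by
  cases a <;> cases b <;> cases c <;> simp_all

lemma Gε_injective {n : ℕ} (hn : 4 ∣ n) : Function.Injective (Gε hn) := by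
  intro ε ε' h
  funext k
  by_contra hk
  have hkn : 4 * k.val + 1 < n := by have := k.isLt; omega
  set x : Fin n := ⟨4 * k.val, by omega⟩ with hx
  set y : Fin n := ⟨4 * k.val + 1, hkn⟩ with hy
  -- the edge {4k, 4k+1} is in Gε δ iff δ k = false
  have key : ∀ (δ : Fin (n / 4) → Bool),
      s(x, y) ∈ edgesOf (Lε hn δ) ↔ δ k = false := by
    intro δ
    constructor
    · intro hmem
      rw [mem_edgesOf_iff] at hmem
      obtain ⟨p, hp, hpe⟩ := hmem
      rw [Lε_length] at hp
      rw [Lε_getElem hn δ p (by omega) (by rw [Lε_length]; omega),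
        Lε_getElem hn δ (p+1) (by omega) (by rw [Lε_length]; omega)] at hpe
      rw [Sym2.eq_iff] at hpe
      have hval : ((fv hn δ ⟨p, by omega⟩ : ℕ) = 4 * k.val ∧ (fv hn δ ⟨p+1, by omega⟩ : ℕ) = 4 * k.val + 1) ∨
          ((fv hn δ ⟨p, by omega⟩ : ℕ) = 4 * k.val + 1 ∧ (fv hn δ ⟨p+1, by omega⟩ : ℕ) = 4 * k.val) := by
        rcases hpe with ⟨h1, h2⟩ | ⟨h1, h2⟩
        · exact Or.inl ⟨(congrArg Fin.val h1).symm, (congrArg Fin.val h2).symm⟩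
        · exact Or.inr ⟨(congrArg Fin.val h2).symm, (congrArg Fin.val h1).symm⟩
      rw [fv_val_nat hn δ p, fv_val_nat hn δ (p+1)] at hval
      have hb1 : bperm (epsb δ (p / 4)) (p % 4) < 4 := bperm_lt _ (by omega)
      have hb2 : bperm (epsb δ ((p+1) / 4)) ((p+1) % 4) < 4 := bperm_lt _ (by omega)
      by_contra hδ
      have hδt : δ k = true := by cases hδk : δ k <;> simp_all
      have hek : epsb δ k.val = true := by rw [epsb_eq δ k, hδt]
      rcases hval with ⟨h1, h2⟩ | ⟨h1, h2⟩ <;>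
      · have hdp : p / 4 = k.val := by omega
        have hdp1 : (p + 1) / 4 = k.val := by omega
        have hm1 : (p + 1) % 4 = p % 4 + 1 := by omega
        rw [hdp, hek] at h1 hb1
        rw [hdp1, hm1, hek] at h2 hb2
        have hp3 : p % 4 = 0 ∨ p % 4 = 1 ∨ p % 4 = 2 := by omega
        rcases hp3 with h3 | h3 | h3 <;> rw [h3] at h1 h2 <;>
          (revert h1 h2; norm_num [bperm])
    · intro hδ
      have hmem := edge_mem_Gε hn δ (4 * k.val) hkn
      have hδ' : epsb δ (k.val) = false := by rw [epsb_eq δ k, hδ]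
      have e1 : fv hn δ ⟨4 * k.val, by omega⟩ = x := Fin.ext (by
        rw [fv_val_nat hn δ _ (by omega)]
        have hd : 4 * k.val / 4 = k.val := by omega
        have hm : 4 * k.val % 4 = 0 := by omega
        rw [hd, hm, hδ']
        show 4 * k.val + bperm false 0 = x.val
        simp [bperm]; rfl)
      have e2 : fv hn δ ⟨4 * k.val + 1, hkn⟩ = y := Fin.ext (by
        rw [fv_val_nat hn δ _ hkn]
        have hd : (4 * k.val + 1) / 4 = k.val := by omega
        have hm : (4 * k.val + 1) % 4 = 1 := by omega
        rw [hd, hm, hδ']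
        show 4 * k.val + bperm false 1 = y.val
        simp [bperm]; rfl)
      rw [e1, e2] at hmem
      exact hmem
  have h1 := key ε
  have h2 := key ε'
  have heq : (Gε hn ε).edgeSet = (Gε hn ε').edgeSet := by rw [h]
  rw [Gε_edgeSet, Gε_edgeSet] at heq
  have hiff := Set.ext_iff.1 heq s(x, y)
  simp only [Set.mem_setOf_eq] at hiff
  rw [h1, h2] at hiff
  cases hεk : ε k <;> cases hε'k : ε' k <;> simp_all

lemma Gε_K4 {n : ℕ} (hn : 4 ∣ n) {ε ε' : Fin (n / 4) → Bool} (hne : ε ≠ ε') :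
    ContainsK4 (Gε hn ε ⊔ Gε hn ε') := by
  obtain ⟨k, hk⟩ : ∃ k, ε k ≠ ε' k := by
    by_contra h; push_neg at h; exact hne (funext h)
  have hkn : 4 * k.val + 3 < n := by have := k.isLt; omega
  refine ⟨fun i => ⟨4 * k.val + i.val, by have := i.isLt; omega⟩, ?_, ?_⟩
  · intro i j hij
    have := congrArg Fin.val hij
    simp only at this
    exact Fin.ext (by omega)
  · intro i j hij
    obtain ⟨c, t, hc⟩ := bperm_cover i j hij
    rw [sup_adj]
    have hεk : ε ⟨k.val, k.isLt⟩ = ε k := by rw [Fin.eta]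
    have hε'k : ε' ⟨k.val, k.isLt⟩ = ε' k := by rw [Fin.eta]
    obtain hcε | hcε := bool_eq_or (c := c) hk
    · refine Or.inl ?_
      rcases hc with ⟨h1, h2⟩ | ⟨h1, h2⟩
      · exact Gε_adj_of hn ε k.val k.isLt t.val t.isLt _ _
          (by show 4 * k.val + i.val = _; rw [hεk, ← hcε, h1])
          (by show 4 * k.val + j.val = _; rw [hεk, ← hcε, h2])
      · exact (Gε_adj_of hn ε k.val k.isLt t.val t.isLt _ _
          (by show 4 * k.val + j.val = _; rw [hεk, ← hcε, h1])
          (by show 4 * k.val + i.val = _; rw [hεk, ← hcε, h2])).symm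
    · refine Or.inr ?_
      rcases hc with ⟨h1, h2⟩ | ⟨h1, h2⟩
      · exact Gε_adj_of hn ε' k.val k.isLt t.val t.isLt _ _
          (by show 4 * k.val + i.val = _; rw [hε'k, ← hcε, h1])
          (by show 4 * k.val + j.val = _; rw [hε'k, ← hcε, h2])
      · exact (Gε_adj_of hn ε' k.val k.isLt t.val t.isLt _ _
          (by show 4 * k.val + j.val = _; rw [hε'k, ← hcε, h1])
          (by show 4 * k.val + i.val = _; rw [hε'k, ← hcε, h2])).symm

theorem stmt18 {n : ℕ} (hn : 4 ∣ n) (hpos : 0 < n) :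
    ∃ F : Set (SimpleGraph (Fin n)),
      (∀ G ∈ F, IsHamPathGraph G) ∧
      (∀ G ∈ F, ∀ H ∈ F, G ≠ H → ContainsK4 (G ⊔ H)) ∧
      2 ^ (n / 4) ≤ F.ncard := by
  refine ⟨Set.range (Gε hn), ?_, ?_, ?_⟩
  · rintro G ⟨ε, rfl⟩
    exact Gε_isHamPath hn hpos ε
  · rintro G ⟨ε, rfl⟩ H ⟨ε', rfl⟩ hGH
    exact Gε_K4 hn (fun h => hGH (by rw [h]))
  · rw [← Nat.card_coe_set_eq, Nat.card_range_of_injective (Gε_injective hn),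
      Nat.card_eq_fintype_card, Fintype.card_fun]
    simp
end

section
/- If the union of two Hamiltonian paths of K_n contains a copy of K_4, then the union is not 3-colorable; consequently at most one member of a family of pairwise K_4-union Hamiltonian paths can be a subgraph of any fixed complete tripartite graph, and M(n, K_4) ≤ (n+1)^2 * (3/2)^(n-1). -/
open SimpleGraph

/-- The complete tripartite graph on `Fin n` determined by the partition of the
vertices into the three fibers of `f`. -/
def tripartiteGraph {n : ℕ} (f : Fin n → Fin 3) : SimpleGraph (Fin n) where
  Adj u v := f u ≠ f v
  symm := ⟨fun u v h => h.symm⟩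
  loopless := ⟨fun u h => h rfl⟩

private lemma walk_edge_of_chain {V : Type*} {G : SimpleGraph V} (c : V → Fin 3)
    {a b : V} (p : G.Walk a b) (hc : List.IsChain (fun x y => c x ≠ c y) p.support) :
    ∀ u v : V, s(u, v) ∈ p.edges → c u ≠ c v := by
  induction p with
  | nil => simp
  | @cons a w b h q ih =>
    intro u v hm
    rw [SimpleGraph.Walk.support_cons, q.support_eq_cons, List.isChain_cons_cons] at hc
    rw [SimpleGraph.Walk.edges_cons, List.mem_cons] at hm
    rcases hm with hm | hm
    · rw [Sym2.eq_iff] at hm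
      rcases hm with ⟨hu, hv⟩ | ⟨hu, hv⟩ <;> subst hu <;> subst hv
      · exact hc.1
      · exact hc.1.symm
    · exact ih (q.support_eq_cons ▸ hc.2) u v hm

private def wtB (x : Bool) : ℕ := cond x 2 1

private def colF {n : ℕ} (L : List (Fin n)) (b : Fin (n - 1) → Bool) (w : Fin n) : Fin 3 :=
  ⟨(∑ j ∈ Finset.range (L.idxOf w),
      if h : j < n - 1 then wtB (b ⟨j, h⟩) else 1) % 3, by omega⟩

private lemma colF_val {n : ℕ} {L : List (Fin n)} (hnd : L.Nodup) (b : Fin (n - 1) → Bool)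
    (i : ℕ) (h : i < L.length) :
    (colF L b (L.get ⟨i, h⟩)).val =
      (∑ j ∈ Finset.range i, if h : j < n - 1 then wtB (b ⟨j, h⟩) else 1) % 3 := by
  simp [colF, List.get_eq_getElem, hnd.idxOf_getElem]

theorem stmt19 {n : ℕ} :
    (∀ P Q : SimpleGraph (Fin n), IsHamPathGraph P → IsHamPathGraph Q →
      ContainsK4 (P ⊔ Q) → ¬ (P ⊔ Q).Colorable 3) ∧
    (∀ F : Set (SimpleGraph (Fin n)),
      (∀ G ∈ F, IsHamPathGraph G) →
      (∀ G ∈ F, ∀ H ∈ F, G ≠ H → ContainsK4 (G ⊔ H)) →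
      (∀ f : Fin n → Fin 3, {G | G ∈ F ∧ G ≤ tripartiteGraph f}.ncard ≤ 1) ∧
      (F.ncard : ℚ) ≤ (n + 1) ^ 2 * (3 / 2 : ℚ) ^ (n - 1)) := by
  classical
  have key : ∀ R : SimpleGraph (Fin n), ContainsK4 R →
      ∀ c : Fin n → Fin 3, ¬ R ≤ tripartiteGraph c := by
    rintro R ⟨f, hf, hadj⟩ c hle
    have hinj : Function.Injective (fun i => c (f i)) := by
      intro i j hij
      by_contra hne
      exact (show c (f i) ≠ c (f j) from hle (hadj i j hne)) hij
    have := Fintype.card_le_of_injective _ hinj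
    simp at this
  constructor
  · rintro P Q _ _ ⟨f, hf, hadj⟩ hcol
    obtain ⟨C⟩ := hcol
    have hinj : Function.Injective (fun i => C (f i)) := by
      intro i j hij
      by_contra hne
      exact C.valid (hadj i j hne) hij
    have := Fintype.card_le_of_injective _ hinj
    simp at this
  · intro F hHam hK4
    have claimA : ∀ f : Fin n → Fin 3, {G | G ∈ F ∧ G ≤ tripartiteGraph f}.ncard ≤ 1 := by
      intro f
      rw [Set.ncard_le_one (Set.toFinite _)]
      rintro G ⟨hG, hGle⟩ H ⟨hH, hHle⟩
      by_contra hne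
      exact key (G ⊔ H) (hK4 G hG H hH hne) f (sup_le hGle hHle)
    refine ⟨claimA, ?_⟩
    rcases Set.eq_empty_or_nonempty F with rfl | ⟨G0, hG0⟩
    · simp only [Set.ncard_empty, Nat.cast_zero]
      positivity
    obtain ⟨u0, -⟩ := hHam G0 hG0
    have hn : 1 ≤ n := u0.pos
    have hfin : F.Finite := Set.toFinite F
    set Fc : Finset (SimpleGraph (Fin n)) := hfin.toFinset with hFc
    set s : Finset (SimpleGraph (Fin n) × (Fin n → Fin 3)) :=
      (Fc ×ˢ (Finset.univ : Finset (Fin n → Fin 3))).filter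
        (fun p => p.1 ≤ tripartiteGraph p.2) with hs
    have hsmem : ∀ p ∈ s, p.1 ∈ Fc ∧ p.1 ≤ tripartiteGraph p.2 := by
      intro p hp
      rw [hs, Finset.mem_filter, Finset.mem_product] at hp
      exact ⟨hp.1.1, hp.2⟩
    -- upper bound on |s|
    have hupper : s.card ≤ 3 ^ n := by
      have hle : s.card ≤ (Finset.univ : Finset (Fin n → Fin 3)).card := by
        apply Finset.card_le_card_of_injOn Prod.snd (fun _ _ => Finset.mem_univ _)
        intro p hp q hq hpq
        obtain ⟨hpF, hple⟩ := hsmem p hp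
        obtain ⟨hqF, hqle⟩ := hsmem q hq
        have h1 : p.1 = q.1 := by
          by_contra hne
          exact key (p.1 ⊔ q.1)
            (hK4 p.1 ((Set.Finite.mem_toFinset hfin).1 hpF)
              q.1 ((Set.Finite.mem_toFinset hfin).1 hqF) hne) p.2
            (sup_le hple (hpq ▸ hqle))
        exact Prod.ext h1 hpq
      simpa using hle
    -- lower bound on |s|
    have hsum : s.card = ∑ G ∈ Fc, (s.filter fun p => p.1 = G).card := by
      apply Finset.card_eq_sum_card_fiberwise
      intro p hp
      exact (hsmem p hp).1
    have hper : ∀ G ∈ Fc, 2 ^ (n - 1) ≤ (s.filter fun p => p.1 = G).card := by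
      intro G hGc
      have hGF : G ∈ F := (Set.Finite.mem_toFinset hfin).1 hGc
      obtain ⟨u, v, p, hham, hedge⟩ := hHam G hGF
      set L := p.support with hL
      have hnd : L.Nodup := hham.isPath.support_nodup
      have hlen : L.length = n := by
        have h1 := hham.length_eq
        have h2 : L.length = p.length + 1 := p.length_support
        simp only [Fintype.card_fin] at h1
        omega
      have hchain : ∀ b : Fin (n - 1) → Bool,
          List.IsChain (fun x y => colF L b x ≠ colF L b y) L := by
        intro b
        rw [List.isChain_iff_getElem]
        intro i hi
        have hi' : i < n - 1 := by omega
        intro hEq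
        have hv := congrArg Fin.val hEq
        have e := colF_val hnd b i (by omega)
        have e' := colF_val hnd b (i + 1) hi
        simp only [List.get_eq_getElem] at e e'
        rw [e, e', Finset.sum_range_succ, dif_pos hi'] at hv
        cases hb : b ⟨i, hi'⟩ <;> rw [hb] at hv <;> simp [wtB] at hv <;> omega
      have hmem : ∀ b : Fin (n - 1) → Bool, (G, colF L b) ∈ s.filter fun p => p.1 = G := by
        intro b
        rw [Finset.mem_filter]
        refine ⟨?_, rfl⟩
        rw [hs, Finset.mem_filter, Finset.mem_product]
        refine ⟨⟨hGc, Finset.mem_univ _⟩, ?_⟩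
        intro x y hxy
        have hxy' : s(x, y) ∈ p.edges := by
          have hm : s(x, y) ∈ G.edgeSet := hxy
          rw [hedge] at hm
          exact hm
        exact (show colF L b x ≠ colF L b y from walk_edge_of_chain (colF L b) p (hchain b) x y hxy')
      have hinj : Set.InjOn (fun b => ((G, colF L b) : SimpleGraph (Fin n) × (Fin n → Fin 3)))
          (Finset.univ : Finset (Fin (n - 1) → Bool)) := by
        intro b _ b' _ hbb
        have hcc : colF L b = colF L b' := congrArg Prod.snd hbb
        funext i
        have h1 : (i : ℕ) < L.length := by omega
        have h2 : (i : ℕ) + 1 < L.length := by omega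
        have e1 := congrArg Fin.val (congrFun hcc (L.get ⟨i, h1⟩))
        have e2 := congrArg Fin.val (congrFun hcc (L.get ⟨(i : ℕ) + 1, h2⟩))
        rw [colF_val hnd, colF_val hnd] at e1 e2
        rw [Finset.sum_range_succ, Finset.sum_range_succ, dif_pos i.isLt, dif_pos i.isLt] at e2
        simp only [Fin.eta] at e2
        have w1 : wtB true = 2 := rfl
        have w0 : wtB false = 1 := rfl
        cases hb : b i <;> cases hb' : b' i
        · rfl
        · exfalso; rw [hb, hb', w0, w1] at e2; omega
        · exfalso; rw [hb, hb', w1, w0] at e2; omega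
        · rfl
      have hcard := Finset.card_le_card_of_injOn (fun b => (G, colF L b))
        (fun b _ => hmem b) hinj
      simpa using hcard
    have hlower : Fc.card * 2 ^ (n - 1) ≤ s.card := by
      calc Fc.card * 2 ^ (n - 1) = ∑ _G ∈ Fc, 2 ^ (n - 1) := by
            rw [Finset.sum_const, smul_eq_mul]
        _ ≤ ∑ G ∈ Fc, (s.filter fun p => p.1 = G).card := Finset.sum_le_sum hper
        _ = s.card := hsum.symm
    have hnat : Fc.card * 2 ^ (n - 1) ≤ (n + 1) ^ 2 * 3 ^ (n - 1) := by
      have h3 : (3 : ℕ) ^ n = 3 * 3 ^ (n - 1) := by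
        conv_lhs => rw [show n = (n - 1) + 1 by omega]
        rw [pow_succ]
        ring
      have h4 : 3 * 3 ^ (n - 1) ≤ (n + 1) ^ 2 * 3 ^ (n - 1) :=
        Nat.mul_le_mul_right _ (by nlinarith)
      calc Fc.card * 2 ^ (n - 1) ≤ s.card := hlower
        _ ≤ 3 ^ n := hupper
        _ = 3 * 3 ^ (n - 1) := h3
        _ ≤ (n + 1) ^ 2 * 3 ^ (n - 1) := h4
    have hncard : F.ncard = Fc.card := Set.ncard_eq_toFinset_card F hfin
    have hq : ((Fc.card : ℚ)) * 2 ^ (n - 1) ≤ ((n : ℚ) + 1) ^ 2 * 3 ^ (n - 1) := by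
      exact_mod_cast hnat
    have h2pos : (0 : ℚ) < 2 ^ (n - 1) := by positivity
    rw [hncard]
    calc (Fc.card : ℚ) ≤ ((n : ℚ) + 1) ^ 2 * 3 ^ (n - 1) / 2 ^ (n - 1) := by
          rw [le_div_iff₀ h2pos]
          exact hq
      _ = ((n : ℚ) + 1) ^ 2 * (3 / 2) ^ (n - 1) := by
          rw [div_pow]
          ring
end
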